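/- Let t₀ < T and 0 < a ≤ b. Let u ∈ L∞(t₀,T) satisfy u(t) ∈ {0} ∪ [a,b] for a.e. t and TV(sgn(u)) < ∞, where for x : [t₀,T] → {0,1} extended by 0 to ℝ, TV(x) := sup{∫_ℝ x(t)φ′(t) dt : φ ∈ C_c¹(ℝ;[−1,1])}, and sgn(u)(t) := 1 if u(t) > 0, else 0. Set K := TV(sgn(u))/2 (so TV(sgn(u)) = 2K with K a nonnegative integer). Then there exists a unique vector t̂ ∈ ℝ^{2K} with t₀ ≤ t̂₁ < t̂₂ < ⋯ < t̂_{2K} ≤ T such that sgn(u) = Σ_{j=1}^{K} χ_{[t̂_{2j−1}, t̂_{2j}]} almost everywhere on (t₀,T). -/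

import Mathlib

open MeasureTheory
open scoped ENNReal

/-- `sgn(x) = 1` if `x > 0`, else `0`. -/
noncomputable def sgn01 (x : ℝ) : ℝ := if 0 < x then 1 else 0

/-- Total variation of a function `x : ℝ → ℝ` (thought of as defined on `[t₀,T]` and
extended by `0`), defined by duality against `C¹` test functions with values in `[-1,1]`;
jumps at the endpoints are counted. -/
noncomputable def totalVar (x : ℝ → ℝ) : ℝ≥0∞ :=
  ⨆ φ : {φ : ℝ → ℝ // ContDiff ℝ 1 φ ∧ HasCompactSupport φ ∧
      ∀ t : ℝ, φ t ∈ Set.Icc (-1 : ℝ) 1},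
    ENNReal.ofReal (∫ t : ℝ, x t * deriv (φ : ℝ → ℝ) t)

open Set Filter Real
open scoped Topology

local notation "τ" => Real.smoothTransition

lemma tau_deriv_zero {s : ℝ} (h : s < 0 ∨ 1 < s) : deriv τ s = 0 := by
  rcases h with h | h
  · have he : τ =ᶠ[𝓝 s] (fun _ => (0:ℝ)) := by
      filter_upwards [Iio_mem_nhds h] with t ht
      exact Real.smoothTransition.zero_of_nonpos (le_of_lt ht)
    rw [he.deriv_eq]; exact deriv_const _ _
  · have he : τ =ᶠ[𝓝 s] (fun _ => (1:ℝ)) := by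
      filter_upwards [Ioi_mem_nhds h] with t ht
      exact Real.smoothTransition.one_of_one_le (le_of_lt ht)
    rw [he.deriv_eq]; exact deriv_const _ _

lemma tau_cont_deriv : Continuous (deriv τ) :=
  (Real.smoothTransition.contDiff (n := 1)).continuous_deriv (by norm_num)

lemma tau_diff : Differentiable ℝ τ :=
  (Real.smoothTransition.contDiff (n := 1)).differentiable (by norm_num)

lemma tau_deriv_bound : ∃ C : ℝ, 0 ≤ C ∧ ∀ s, |deriv τ s| ≤ C := by
  obtain ⟨C, hC⟩ := isCompact_Icc.exists_bound_of_continuousOn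
    (f := deriv τ) (s := Icc (0:ℝ) 1) tau_cont_deriv.continuousOn
  refine ⟨max C 0, le_max_right _ _, fun s => ?_⟩
  by_cases hs : s ∈ Icc (0:ℝ) 1
  · exact le_trans (by simpa using hC s hs) (le_max_left _ _)
  · have : s < 0 ∨ 1 < s := by
      simp only [mem_Icc, not_and_or, not_le] at hs; tauto
    rw [tau_deriv_zero this]; simp

/-! ### Chain of smooth transitions -/

noncomputable def chainFn (N : ℕ) (s e c : ℕ → ℝ) (t : ℝ) : ℝ :=
  ∑ m ∈ Finset.range N, c m * τ ((t - s m) / (e m - s m))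

noncomputable def chainFn' (N : ℕ) (s e c : ℕ → ℝ) (t : ℝ) : ℝ :=
  ∑ m ∈ Finset.range N, c m * (deriv τ ((t - s m) / (e m - s m)) * (1 / (e m - s m)))

section Chain

variable {N : ℕ} {s e c : ℕ → ℝ}
variable (hlt : ∀ m, m < N → s m < e m) (hle : ∀ m, m + 1 < N → e m ≤ s (m + 1))

include hlt hle in
lemma chain_e_le_s : ∀ m j, m < j → j < N → e m ≤ s j := by
  intro m j hmj hjN
  induction j with
  | zero => omega
  | succ j ih =>
    rcases Nat.lt_succ_iff_lt_or_eq.1 hmj with h | h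
    · exact le_trans (ih h (by omega)) (le_trans (le_of_lt (hlt j (by omega))) (hle j hjN))
    · subst h; exact hle m hjN

include hlt hle in
lemma chain_s_le_s : ∀ m j, m ≤ j → j < N → s m ≤ s j := by
  intro m j hmj hjN
  rcases eq_or_lt_of_le hmj with h | h
  · subst h; exact le_rfl
  · exact le_trans (le_of_lt (hlt m (by omega))) (chain_e_le_s hlt hle m j h hjN)

lemma chain_contDiff : ContDiff ℝ 1 (chainFn N s e c) := by
  apply ContDiff.sum
  intro m _
  exact contDiff_const.mul
    (Real.smoothTransition.contDiff.comp ((contDiff_id.sub contDiff_const).div_const _))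

include hlt in
lemma chain_hasDerivAt (t : ℝ) :
    HasDerivAt (chainFn N s e c) (chainFn' N s e c t) t := by
  apply HasDerivAt.fun_sum
  intro m hm
  have hinner : HasDerivAt (fun t : ℝ => (t - s m) / (e m - s m)) (1 / (e m - s m)) t :=
    ((hasDerivAt_id t).sub_const _).div_const _
  have houter : HasDerivAt τ (deriv τ ((t - s m) / (e m - s m))) ((t - s m) / (e m - s m)) :=
    (tau_diff _).hasDerivAt
  exact (houter.comp t hinner).const_mul _

include hlt hle in
lemma chain_eval (hN : 0 < N) (t : ℝ) :
    ∃ j < N, ∃ θ : ℝ, 0 ≤ θ ∧ θ ≤ 1 ∧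
      chainFn N s e c t =
        (1 - θ) * (∑ m ∈ Finset.range j, c m) + θ * (∑ m ∈ Finset.range (j + 1), c m) := by
  classical
  by_cases h0 : t < s 0
  · refine ⟨0, hN, 0, le_rfl, zero_le_one, ?_⟩
    have : chainFn N s e c t = 0 := by
      apply Finset.sum_eq_zero
      intro m hm
      have hm' := Finset.mem_range.1 hm
      have : (t - s m) / (e m - s m) ≤ 0 := by
        apply div_nonpos_of_nonpos_of_nonneg
        · have := chain_s_le_s hlt hle 0 m (by omega) hm'; linarith
        · linarith [hlt m hm']
      rw [Real.smoothTransition.zero_of_nonpos this]; ring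
    simp [this]
  · push_neg at h0
    set j := Nat.findGreatest (fun m => s m ≤ t) (N - 1) with hj
    have hjN : j < N := by
      have : j ≤ N - 1 := Nat.findGreatest_le _
      omega
    have hsj : s j ≤ t := Nat.findGreatest_spec (P := fun m => s m ≤ t) (Nat.zero_le _) h0
    have hgt : ∀ k, j < k → k < N → t < s k := by
      intro k hk hkN
      have := Nat.findGreatest_is_greatest (P := fun m => s m ≤ t) hk (by omega)
      exact not_le.mp this
    refine ⟨j, hjN, τ ((t - s j) / (e j - s j)), Real.smoothTransition.nonneg _,
      Real.smoothTransition.le_one _, ?_⟩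
    have hsplit : chainFn N s e c t =
        (∑ m ∈ Finset.range j, c m * τ ((t - s m) / (e m - s m)))
          + c j * τ ((t - s j) / (e j - s j))
          + ∑ m ∈ Finset.Ico (j + 1) N, c m * τ ((t - s m) / (e m - s m)) := by
      rw [chainFn, Finset.range_eq_Ico,
        ← Finset.sum_Ico_consecutive _ (Nat.zero_le (j+1)) (by omega : j + 1 ≤ N),
        ← Finset.range_eq_Ico, Finset.sum_range_succ]
    have h1 : ∀ m ∈ Finset.range j, c m * τ ((t - s m) / (e m - s m)) = c m := by
      intro m hm
      have hm' := Finset.mem_range.1 hm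
      have hem : e m ≤ t := le_trans (chain_e_le_s hlt hle m j hm' hjN) hsj
      have harg : 1 ≤ (t - s m) / (e m - s m) := by
        rw [le_div_iff₀ (by linarith [hlt m (by omega)])]
        linarith
      rw [Real.smoothTransition.one_of_one_le harg]; ring
    have h2 : ∀ m ∈ Finset.Ico (j + 1) N, c m * τ ((t - s m) / (e m - s m)) = 0 := by
      intro m hm
      obtain ⟨hm1, hm2⟩ := Finset.mem_Ico.1 hm
      have : (t - s m) / (e m - s m) ≤ 0 := by
        apply div_nonpos_of_nonpos_of_nonneg
        · linarith [hgt m (by omega) hm2]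
        · linarith [hlt m hm2]
      rw [Real.smoothTransition.zero_of_nonpos this]; ring
    rw [hsplit, Finset.sum_congr rfl h1, Finset.sum_eq_zero h2, Finset.sum_range_succ]
    ring

include hlt hle in
lemma chain_abs_le (hS : ∀ j, j ≤ N → |∑ m ∈ Finset.range j, c m| ≤ 1) (t : ℝ) :
    |chainFn N s e c t| ≤ 1 := by
  rcases Nat.eq_zero_or_pos N with h | hN
  · subst h; simp [chainFn]
  obtain ⟨j, hjN, θ, hθ0, hθ1, heq⟩ := chain_eval hlt hle hN t
  rw [heq]
  calc |(1 - θ) * (∑ m ∈ Finset.range j, c m) + θ * (∑ m ∈ Finset.range (j+1), c m)|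
      ≤ |(1 - θ) * (∑ m ∈ Finset.range j, c m)| + |θ * (∑ m ∈ Finset.range (j+1), c m)| :=
        abs_add_le _ _
    _ ≤ (1 - θ) * 1 + θ * 1 := by
        rw [abs_mul, abs_mul, abs_of_nonneg (by linarith : (0:ℝ) ≤ 1 - θ), abs_of_nonneg hθ0]
        have h1 := hS j (by omega)
        have h2 := hS (j+1) (by omega)
        nlinarith [abs_nonneg (∑ m ∈ Finset.range j, c m),
          abs_nonneg (∑ m ∈ Finset.range (j+1), c m)]
    _ = 1 := by ring

include hlt hle in
lemma chain_plateau {j : ℕ} (hjN : j < N) {t : ℝ} (het : e j ≤ t)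
    (hts : ∀ k, j < k → k < N → t ≤ s k) :
    chainFn N s e c t = ∑ m ∈ Finset.range (j + 1), c m := by
  have hsplit : chainFn N s e c t =
      (∑ m ∈ Finset.range (j+1), c m * τ ((t - s m) / (e m - s m)))
        + ∑ m ∈ Finset.Ico (j + 1) N, c m * τ ((t - s m) / (e m - s m)) := by
    rw [chainFn, Finset.range_eq_Ico,
      ← Finset.sum_Ico_consecutive _ (Nat.zero_le (j+1)) (by omega : j + 1 ≤ N),
      ← Finset.range_eq_Ico]
  have h1 : ∀ m ∈ Finset.range (j+1), c m * τ ((t - s m) / (e m - s m)) = c m := by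
    intro m hm
    have hm' := Finset.mem_range.1 hm
    have hem : e m ≤ t := by
      rcases Nat.lt_succ_iff_lt_or_eq.1 hm' with h | h
      · exact le_trans (chain_e_le_s hlt hle m j h hjN)
          (le_trans (le_of_lt (hlt j hjN)) het)
      · subst h; exact het
    have harg : 1 ≤ (t - s m) / (e m - s m) := by
      rw [le_div_iff₀ (by linarith [hlt m (by omega)])]
      linarith
    rw [Real.smoothTransition.one_of_one_le harg]; ring
  have h2 : ∀ m ∈ Finset.Ico (j + 1) N, c m * τ ((t - s m) / (e m - s m)) = 0 := by
    intro m hm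
    obtain ⟨hm1, hm2⟩ := Finset.mem_Ico.1 hm
    have : (t - s m) / (e m - s m) ≤ 0 := by
      apply div_nonpos_of_nonpos_of_nonneg
      · linarith [hts m (by omega) hm2]
      · linarith [hlt m hm2]
    rw [Real.smoothTransition.zero_of_nonpos this]; ring
  rw [hsplit, Finset.sum_congr rfl h1, Finset.sum_eq_zero h2, add_zero]

include hlt hle in
lemma chain_support (hsum : ∑ m ∈ Finset.range N, c m = 0) :
    ∀ t, t ∉ Icc (s 0 - 1) (e (N - 1) + 1) → chainFn N s e c t = 0 := by
  intro t ht
  rcases Nat.eq_zero_or_pos N with h | hN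
  · subst h; simp [chainFn]
  rw [mem_Icc, not_and_or, not_le, not_le] at ht
  rcases ht with ht | ht
  · apply Finset.sum_eq_zero
    intro m hm
    have hm' := Finset.mem_range.1 hm
    have : (t - s m) / (e m - s m) ≤ 0 := by
      apply div_nonpos_of_nonpos_of_nonneg
      · have := chain_s_le_s hlt hle 0 m (by omega) hm'; linarith
      · linarith [hlt m hm']
    rw [Real.smoothTransition.zero_of_nonpos this]; ring
  · have := chain_plateau (c := c) hlt hle (by omega : N - 1 < N) (t := t) (by linarith)
      (fun k hk hkN => absurd hkN (by omega))
    rw [this, (by omega : N - 1 + 1 = N), hsum]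

end Chain

/-! ### Integrals against transition derivatives -/

section Integrals

lemma transition_hasDerivAt {s e : ℝ} (t : ℝ) :
    HasDerivAt (fun t : ℝ => τ ((t - s) / (e - s)))
      (deriv τ ((t - s) / (e - s)) * (1 / (e - s))) t := by
  have hinner : HasDerivAt (fun t : ℝ => (t - s) / (e - s)) (1 / (e - s)) t :=
    ((hasDerivAt_id t).sub_const _).div_const _
  exact ((tau_diff _).hasDerivAt).comp t hinner

lemma transition_deriv_cont {s e : ℝ} :
    Continuous (fun t : ℝ => deriv τ ((t - s) / (e - s)) * (1 / (e - s))) :=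
  (tau_cont_deriv.comp ((continuous_id.sub continuous_const).div_const _)).mul continuous_const

lemma transition_deriv_zero {s e : ℝ} (h : s < e) {t : ℝ} (ht : t ∉ Icc s e) :
    deriv τ ((t - s) / (e - s)) * (1 / (e - s)) = 0 := by
  rw [mem_Icc, not_and_or, not_le, not_le] at ht
  have harg : (t - s) / (e - s) < 0 ∨ 1 < (t - s) / (e - s) := by
    rcases ht with ht | ht
    · exact Or.inl (div_neg_of_neg_of_pos (by linarith) (by linarith))
    · exact Or.inr (by rw [lt_div_iff₀ (by linarith)]; linarith)
  rw [tau_deriv_zero harg, zero_mul]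

lemma transition_deriv_integrable {s e : ℝ} (h : s < e) :
    Integrable (fun t : ℝ => deriv τ ((t - s) / (e - s)) * (1 / (e - s))) := by
  apply Continuous.integrable_of_hasCompactSupport transition_deriv_cont
  exact HasCompactSupport.intro isCompact_Icc (fun t ht => transition_deriv_zero h ht)

lemma transition_integral {s e : ℝ} (h : s < e) :
    ∫ t : ℝ, deriv τ ((t - s) / (e - s)) * (1 / (e - s)) = 1 := by
  have hℓ0 : (0:ℝ) < e - s := by linarith
  have hzero : ∀ t ∉ Ioc (s - 1) (e + 1),
      deriv τ ((t - s) / (e - s)) * (1 / (e - s)) = 0 := by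
    intro t ht
    rw [mem_Ioc, not_and_or, not_lt, not_le] at ht
    apply transition_deriv_zero h
    rw [mem_Icc, not_and_or, not_le, not_le]
    rcases ht with ht | ht
    · exact Or.inl (by linarith)
    · exact Or.inr (by linarith)
  have h1 : (∫ t : ℝ, deriv τ ((t - s) / (e - s)) * (1 / (e - s)))
      = ∫ t in Set.Ioc (s - 1) (e + 1), deriv τ ((t - s) / (e - s)) * (1 / (e - s)) :=
    (setIntegral_eq_integral_of_forall_compl_eq_zero hzero).symm
  have h2 : (∫ t in Set.Ioc (s - 1) (e + 1), deriv τ ((t - s) / (e - s)) * (1 / (e - s)))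
      = ∫ t in (s-1)..(e+1), deriv τ ((t - s) / (e - s)) * (1 / (e - s)) :=
    (intervalIntegral.integral_of_le (by linarith : s - 1 ≤ e + 1)).symm
  rw [h1, h2,
    intervalIntegral.integral_eq_sub_of_hasDerivAt (fun x _ => transition_hasDerivAt x)
      (transition_deriv_cont.intervalIntegrable _ _)]
  have e1 : τ ((e + 1 - s) / (e - s)) = 1 :=
    Real.smoothTransition.one_of_one_le (by rw [le_div_iff₀ hℓ0]; linarith)
  have e2 : τ ((s - 1 - s) / (e - s)) = 0 :=
    Real.smoothTransition.zero_of_nonpos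
      (div_nonpos_of_nonpos_of_nonneg (by linarith) (by linarith))
  rw [e1, e2]; ring

lemma indicator_bound (A : Set ℝ) (t : ℝ) :
    ‖A.indicator (fun _ => (1:ℝ)) t‖ ≤ 1 := by
  by_cases h : t ∈ A <;> simp [Set.indicator_apply, h]

lemma indicator_mul_integrable {A : Set ℝ} (hA : MeasurableSet A) {g : ℝ → ℝ}
    (hg : Integrable g) :
    Integrable (fun t => A.indicator (fun _ => (1:ℝ)) t * g t) :=
  hg.bdd_mul ((measurable_const.indicator hA).aestronglyMeasurable)
    (Eventually.of_forall (indicator_bound A))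

lemma indicator_one_integrable {S : Set ℝ} (hS : MeasurableSet S)
    (hfin : volume S < ⊤) :
    Integrable (S.indicator (fun _ => (1:ℝ))) := by
  rw [integrable_indicator_iff hS]
  exact integrableOn_const hfin.ne

lemma transition_down {A : Set ℝ} (hA : MeasurableSet A) {s e C : ℝ} (h : s < e)
    (hC0 : 0 ≤ C) (hC : ∀ z, |deriv τ z| ≤ C) :
    |∫ t : ℝ, A.indicator (fun _ => (1:ℝ)) t * (deriv τ ((t - s) / (e - s)) * (1 / (e - s)))|
      ≤ C * (1 / (e - s)) * (volume (Icc s e ∩ A)).toReal := by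
  have hℓ0 : (0:ℝ) < e - s := by linarith
  have hSmeas : MeasurableSet (Icc s e ∩ A) := measurableSet_Icc.inter hA
  have hSfin : volume (Icc s e ∩ A) < ⊤ :=
    lt_of_le_of_lt (measure_mono inter_subset_left) (by rw [Real.volume_Icc]; exact ENNReal.ofReal_lt_top)
  have hbound_int : Integrable
      (fun t => (C * (1 / (e - s))) * (Icc s e ∩ A).indicator (fun _ => (1:ℝ)) t) :=
    (indicator_one_integrable hSmeas hSfin).const_mul _
  have hptwise : ∀ t, ‖A.indicator (fun _ => (1:ℝ)) t *
      (deriv τ ((t - s) / (e - s)) * (1 / (e - s)))‖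
      ≤ (C * (1 / (e - s))) * (Icc s e ∩ A).indicator (fun _ => (1:ℝ)) t := by
    intro t
    by_cases htA : t ∈ A
    · by_cases htI : t ∈ Icc s e
      · have hmem : t ∈ Icc s e ∩ A := ⟨htI, htA⟩
        rw [Set.indicator_of_mem htA, Set.indicator_of_mem hmem, one_mul, mul_one]
        rw [norm_mul]
        have h1 : ‖deriv τ ((t - s) / (e - s))‖ ≤ C := by
          rw [Real.norm_eq_abs]; exact hC _
        have h2 : ‖(1 / (e - s))‖ = 1 / (e - s) := by
          rw [Real.norm_eq_abs, abs_of_pos (by positivity)]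
        rw [h2]
        apply mul_le_mul_of_nonneg_right h1 (by positivity)
      · rw [transition_deriv_zero h htI]
        simp only [mul_zero, norm_zero]
        exact mul_nonneg (by positivity) (Set.indicator_nonneg (fun _ _ => zero_le_one) t)
    · rw [Set.indicator_of_notMem htA, zero_mul, norm_zero]
      exact mul_nonneg (by positivity) (Set.indicator_nonneg (fun _ _ => zero_le_one) t)
  calc |∫ t : ℝ, A.indicator (fun _ => (1:ℝ)) t * (deriv τ ((t - s) / (e - s)) * (1 / (e - s)))|
      ≤ ∫ t : ℝ, (C * (1 / (e - s))) * (Icc s e ∩ A).indicator (fun _ => (1:ℝ)) t := by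
        rw [← Real.norm_eq_abs]
        exact norm_integral_le_of_norm_le hbound_int (Eventually.of_forall hptwise)
    _ = C * (1 / (e - s)) * (volume (Icc s e ∩ A)).toReal := by
        rw [MeasureTheory.integral_const_mul]
        congr 1
        exact integral_indicator_one hSmeas

lemma transition_up {A : Set ℝ} (hA : MeasurableSet A) {s e C : ℝ} (h : s < e)
    (hC0 : 0 ≤ C) (hC : ∀ z, |deriv τ z| ≤ C) :
    1 - C * (1 / (e - s)) * (volume (Icc s e \ A)).toReal
      ≤ ∫ t : ℝ, A.indicator (fun _ => (1:ℝ)) t * (deriv τ ((t - s) / (e - s)) * (1 / (e - s))) := by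
  have hcompl := transition_down (A := Aᶜ) hA.compl h hC0 hC
  have hint_g' := transition_deriv_integrable h
  have hint_x := indicator_mul_integrable hA hint_g'
  have hint_xc := indicator_mul_integrable hA.compl hint_g'
  have hsplit : ∀ t : ℝ, A.indicator (fun _ => (1:ℝ)) t * (deriv τ ((t - s) / (e - s)) * (1 / (e - s)))
      = (deriv τ ((t - s) / (e - s)) * (1 / (e - s)))
        - Aᶜ.indicator (fun _ => (1:ℝ)) t * (deriv τ ((t - s) / (e - s)) * (1 / (e - s))) := by
    intro t
    by_cases htA : t ∈ A
    · rw [Set.indicator_of_mem htA, Set.indicator_of_notMem (by simpa using htA)]; ring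
    · rw [Set.indicator_of_notMem htA, Set.indicator_of_mem (by simpa using htA)]; ring
  have hinteq : ∫ t : ℝ, A.indicator (fun _ => (1:ℝ)) t * (deriv τ ((t - s) / (e - s)) * (1 / (e - s)))
      = 1 - ∫ t : ℝ, Aᶜ.indicator (fun _ => (1:ℝ)) t * (deriv τ ((t - s) / (e - s)) * (1 / (e - s))) := by
    have h1 := integral_congr_ae (μ := volume) (Eventually.of_forall hsplit)
    rw [h1, integral_sub hint_g' hint_xc, transition_integral h]
  rw [hinteq]
  have : volume (Icc s e ∩ Aᶜ) = volume (Icc s e \ A) := by rw [diff_eq]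
  rw [← this]
  have habs := abs_le.1 hcompl
  linarith [habs.2]

end Integrals

/-! ### Density points -/

lemma exists_density_point {S : Set ℝ} (hS : MeasurableSet S) (hpos : 0 < volume S) :
    ∃ p ∈ S, ∀ ε : ℝ, 0 < ε → ∃ r₀ > 0, ∀ r : ℝ, 0 < r → r < r₀ →
      volume (Icc (p - r) (p + r) \ S) ≤ ENNReal.ofReal (ε * r) := by
  have hae := Besicovitch.ae_tendsto_measure_inter_div (volume : Measure ℝ) S
  have hne : (volume.restrict S) ≠ 0 := by
    rw [Ne, Measure.restrict_eq_zero]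
    exact (ne_of_gt hpos)
  haveI : (ae (volume.restrict S)).NeBot := ae_neBot.2 hne
  obtain ⟨p, hpS, hp⟩ := ((ae_restrict_mem hS).and hae).exists
  refine ⟨p, hpS, fun ε hε => ?_⟩
  set ε' := min ε 2 with hε'def
  have hε'0 : 0 < ε' := lt_min hε two_pos
  have hε'2 : ε' ≤ 2 := min_le_right _ _
  have hc : ENNReal.ofReal (1 - ε' / 2) < 1 := by
    rw [← ENNReal.ofReal_one]
    exact ENNReal.ofReal_lt_ofReal_iff_of_nonneg (by linarith) |>.2 (by linarith)
  have hev : ∀ᶠ r in 𝓝[>] (0:ℝ),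
      ENNReal.ofReal (1 - ε' / 2) <
        volume (S ∩ Metric.closedBall p r) / volume (Metric.closedBall p r) :=
    hp.eventually (eventually_gt_nhds hc)
  rw [eventually_nhdsWithin_iff, Metric.eventually_nhds_iff] at hev
  obtain ⟨r₀, hr₀, hball⟩ := hev
  refine ⟨r₀, hr₀, fun r hr hrr₀ => ?_⟩
  have hdist : dist r (0:ℝ) < r₀ := by
    rw [Real.dist_eq, sub_zero, abs_of_pos hr]; exact hrr₀
  have h1 := hball hdist (mem_Ioi.2 hr)
  have hB : Metric.closedBall p r = Icc (p - r) (p + r) := Real.closedBall_eq_Icc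
  have hvol : volume (Metric.closedBall p r) = ENNReal.ofReal (2 * r) := by
    rw [hB, Real.volume_Icc]; congr 1; ring
  have hne0 : volume (Metric.closedBall p r) ≠ 0 := by
    rw [hvol, Ne, ENNReal.ofReal_eq_zero, not_le]; positivity
  have hnetop : volume (Metric.closedBall p r) ≠ ⊤ := by
    rw [hvol]; exact ENNReal.ofReal_ne_top
  have h2 : ENNReal.ofReal (1 - ε' / 2) * volume (Metric.closedBall p r)
      < volume (S ∩ Metric.closedBall p r) :=
    (ENNReal.lt_div_iff_mul_lt (Or.inl hne0) (Or.inl hnetop)).1 h1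
  have h3 : ENNReal.ofReal ((1 - ε' / 2) * (2 * r)) ≤ volume (Icc (p - r) (p + r) ∩ S) := by
    rw [inter_comm, ← hB]
    refine le_of_lt ?_
    calc ENNReal.ofReal ((1 - ε' / 2) * (2 * r))
        = ENNReal.ofReal (1 - ε' / 2) * ENNReal.ofReal (2 * r) :=
          ENNReal.ofReal_mul (by linarith)
      _ = ENNReal.ofReal (1 - ε' / 2) * volume (Metric.closedBall p r) := by rw [hvol]
      _ < volume (S ∩ Metric.closedBall p r) := h2
  have hsum := measure_inter_add_diff (μ := volume) (Icc (p - r) (p + r)) hS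
  have hIccvol : volume (Icc (p - r) (p + r)) = ENNReal.ofReal (2 * r) := by
    rw [Real.volume_Icc]; congr 1; ring
  have hfin : volume (Icc (p - r) (p + r) ∩ S) ≠ ⊤ := by
    refine ne_of_lt (lt_of_le_of_lt (measure_mono inter_subset_left) ?_)
    rw [hIccvol]; exact ENNReal.ofReal_lt_top
  have key : volume (Icc (p - r) (p + r) \ S) ≤ ENNReal.ofReal (ε' * r) := by
    have hle : volume (Icc (p - r) (p + r) \ S) + volume (Icc (p - r) (p + r) ∩ S)
        ≤ ENNReal.ofReal (ε' * r) + volume (Icc (p - r) (p + r) ∩ S) := by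
      rw [add_comm (volume (Icc (p - r) (p + r) \ S)), hsum, hIccvol]
      calc ENNReal.ofReal (2 * r)
          = ENNReal.ofReal (ε' * r + (1 - ε' / 2) * (2 * r)) := by congr 1; ring
        _ = ENNReal.ofReal (ε' * r) + ENNReal.ofReal ((1 - ε' / 2) * (2 * r)) :=
            ENNReal.ofReal_add (by positivity) (by nlinarith)
        _ ≤ ENNReal.ofReal (ε' * r) + volume (Icc (p - r) (p + r) ∩ S) := by
            exact add_le_add_right h3 _
    exact ENNReal.add_le_add_iff_right hfin |>.1 hle
  exact le_trans key (ENNReal.ofReal_le_ofReal (by nlinarith [min_le_left ε 2]))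

/-! ### Density point predicates and alternation patterns -/

def DP1 (A : Set ℝ) (p : ℝ) : Prop :=
  ∀ ε : ℝ, 0 < ε → ∃ r₀ > 0, ∀ r : ℝ, 0 < r → r < r₀ →
    volume (Icc (p - r) (p + r) \ A) ≤ ENNReal.ofReal (ε * r)

def DP0 (A : Set ℝ) (q : ℝ) : Prop :=
  ∀ ε : ℝ, 0 < ε → ∃ r₀ > 0, ∀ r : ℝ, 0 < r → r < r₀ →
    volume (Icc (q - r) (q + r) ∩ A) ≤ ENNReal.ofReal (ε * r)

lemma exists_DP1 {A S : Set ℝ} (hS : MeasurableSet S) (hpos : 0 < volume S) (hsub : S ⊆ A) :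
    ∃ p ∈ S, DP1 A p := by
  obtain ⟨p, hpS, hp⟩ := exists_density_point hS hpos
  refine ⟨p, hpS, fun ε hε => ?_⟩
  obtain ⟨r₀, hr₀, h⟩ := hp ε hε
  exact ⟨r₀, hr₀, fun r h1 h2 =>
    le_trans (measure_mono (diff_subset_diff_right hsub)) (h r h1 h2)⟩

lemma exists_DP0 {A S : Set ℝ} (hS : MeasurableSet S) (hpos : 0 < volume S)
    (hdisj : ∀ t ∈ S, t ∉ A) :
    ∃ p ∈ S, DP0 A p := by
  obtain ⟨p, hpS, hp⟩ := exists_density_point hS hpos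
  refine ⟨p, hpS, fun ε hε => ?_⟩
  obtain ⟨r₀, hr₀, h⟩ := hp ε hε
  refine ⟨r₀, hr₀, fun r h1 h2 => le_trans (measure_mono ?_) (h r h1 h2)⟩
  intro t ⟨htI, htA⟩
  exact ⟨htI, fun htS => hdisj t htS htA⟩

lemma DP0_of_far {A : Set ℝ} {t₀ T q : ℝ} (hsub : A ⊆ Ioo t₀ T) (h : T < q ∨ q < t₀) :
    DP0 A q := by
  intro ε hε
  rcases h with h | h
  · refine ⟨q - T, by linarith, fun r h1 h2 => ?_⟩
    have : Icc (q - r) (q + r) ∩ A = ∅ := by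
      apply eq_empty_of_forall_notMem
      rintro t ⟨⟨ht1, _⟩, htA⟩
      have := (hsub htA).2
      linarith
    rw [this, measure_empty]
    positivity
  · refine ⟨t₀ - q, by linarith, fun r h1 h2 => ?_⟩
    have : Icc (q - r) (q + r) ∩ A = ∅ := by
      apply eq_empty_of_forall_notMem
      rintro t ⟨⟨_, ht2⟩, htA⟩
      have := (hsub htA).1
      linarith
    rw [this, measure_empty]
    positivity

lemma DP1_mem {A : Set ℝ} {t₀ T p : ℝ} (hsub : A ⊆ Ioo t₀ T) (h : DP1 A p) :
    p ∈ Ioo t₀ T := by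
  by_contra hp
  rw [mem_Ioo, not_and_or, not_lt, not_lt] at hp
  obtain ⟨r₀, hr₀, hr⟩ := h (1/2) (by norm_num)
  set r := r₀ / 2 with hrdef
  have hrpos : 0 < r := by positivity
  have hkey := hr r hrpos (by simp [hrdef]; linarith)
  have hbig : ENNReal.ofReal r ≤ volume (Icc (p - r) (p + r) \ A) := by
    rcases hp with hp | hp
    · have hsub2 : Icc (p - r) p ⊆ Icc (p - r) (p + r) \ A := by
        intro t ⟨ht1, ht2⟩
        exact ⟨⟨ht1, by linarith⟩, fun htA => by have := (hsub htA).1; linarith⟩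
      calc ENNReal.ofReal r = volume (Icc (p - r) p) := by
            rw [Real.volume_Icc]; congr 1; ring
        _ ≤ _ := measure_mono hsub2
    · have hsub2 : Icc p (p + r) ⊆ Icc (p - r) (p + r) \ A := by
        intro t ⟨ht1, ht2⟩
        exact ⟨⟨by linarith, ht2⟩, fun htA => by have := (hsub htA).2; linarith⟩
      calc ENNReal.ofReal r = volume (Icc p (p + r)) := by
            rw [Real.volume_Icc]; congr 1; ring
        _ ≤ _ := measure_mono hsub2
  have := le_trans hbig hkey
  rw [ENNReal.ofReal_le_ofReal_iff (by positivity)] at this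
  linarith

def Pat (A : Set ℝ) (k : ℕ) : Prop :=
  ∃ p q : ℕ → ℝ, (∀ i, i < k → DP1 A (p i)) ∧ (∀ i, i < k → DP0 A (q i)) ∧
    (∀ i, i < k → p i < q i) ∧ (∀ i, i + 1 < k → q i < p (i + 1))

lemma cAlt_partial (j : ℕ) :
    ∑ m ∈ Finset.range j, (if m % 2 = 0 then (1:ℝ) else -1)
      = if j % 2 = 0 then 0 else 1 := by
  induction j with
  | zero => simp
  | succ j ih =>
    rw [Finset.sum_range_succ, ih]
    rcases Nat.mod_two_eq_zero_or_one j with h | h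
    · have h2 : (j + 1) % 2 = 1 := by omega
      simp [h, h2]
    · have h2 : (j + 1) % 2 = 0 := by omega
      simp [h, h2]

lemma lb_sum (k : ℕ) :
    ∑ m ∈ Finset.range (2 * k), (if m % 2 = 0 then (3/4 : ℝ) else -(1/4)) = k / 2 := by
  induction k with
  | zero => simp
  | succ k ih =>
    have h1 : 2 * (k + 1) = (2 * k + 1) + 1 := by ring
    rw [h1, Finset.sum_range_succ, Finset.sum_range_succ, ih]
    have h2 : (2 * k) % 2 = 0 := by omega
    have h3 : (2 * k + 1) % 2 = 1 := by omega
    rw [if_pos h2, if_neg (by omega)]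
    push_cast
    ring

lemma pat_le_totalVar {A : Set ℝ} (hA : MeasurableSet A) {k : ℕ} (hk : Pat A k) :
    ENNReal.ofReal (k / 2 : ℝ) ≤ totalVar (A.indicator (fun _ => (1:ℝ))) := by
  rcases Nat.eq_zero_or_pos k with rfl | hkpos
  · simp
  obtain ⟨p, q, hp1, hq0, hpq, hqp⟩ := hk
  obtain ⟨C, hC0, hCb⟩ := tau_deriv_bound
  set ε : ℝ := 1 / (2 * (C + 1)) with hεdef
  have hε : 0 < ε := by positivity
  have hCε : C * ε ≤ 1 / 2 := by
    rw [hεdef, mul_one_div, div_le_div_iff₀ (by positivity) (by norm_num)]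
    nlinarith
  set R1 : ℕ → ℝ := fun i => if h : i < k then Classical.choose (hp1 i h ε hε) else 1 with hR1def
  have hR1 : ∀ i, i < k → 0 < R1 i ∧ ∀ r : ℝ, 0 < r → r < R1 i →
      volume (Icc (p i - r) (p i + r) \ A) ≤ ENNReal.ofReal (ε * r) := by
    intro i h
    have hspec := Classical.choose_spec (hp1 i h ε hε)
    simp only [hR1def, dif_pos h]
    exact ⟨hspec.1, hspec.2⟩
  set R0 : ℕ → ℝ := fun i => if h : i < k then Classical.choose (hq0 i h ε hε) else 1 with hR0def
  have hR0 : ∀ i, i < k → 0 < R0 i ∧ ∀ r : ℝ, 0 < r → r < R0 i →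
      volume (Icc (q i - r) (q i + r) ∩ A) ≤ ENNReal.ofReal (ε * r) := by
    intro i h
    have hspec := Classical.choose_spec (hq0 i h ε hε)
    simp only [hR0def, dif_pos h]
    exact ⟨hspec.1, hspec.2⟩
  set G : ℕ → ℝ := fun i => min (q i - p i) (if i + 1 < k then p (i + 1) - q i else 1) with hGdef
  have hG : ∀ i, i < k → 0 < G i := by
    intro i h
    apply lt_min (by linarith [hpq i h])
    split
    · linarith [hqp i (by assumption)]
    · norm_num
  set δ : ℝ := (Finset.range k).inf' ⟨0, Finset.mem_range.2 hkpos⟩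
    (fun i => min (R1 i) (min (R0 i) (G i))) with hδdef
  have hδ : 0 < δ := by
    rw [hδdef]; apply (Finset.lt_inf'_iff _).2
    intro i hi
    have hik := Finset.mem_range.1 hi
    exact lt_min (hR1 i hik).1 (lt_min (hR0 i hik).1 (hG i hik))
  have hδle : ∀ i, i < k → δ ≤ min (R1 i) (min (R0 i) (G i)) := by
    intro i h
    exact Finset.inf'_le _ (Finset.mem_range.2 h)
  set r : ℝ := δ / 4 with hrdef
  have hr : 0 < r := by positivity
  have hrR1 : ∀ i, i < k → r < R1 i := fun i h =>
    lt_of_lt_of_le (by linarith) (le_trans (hδle i h) (min_le_left _ _))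
  have hrR0 : ∀ i, i < k → r < R0 i := fun i h =>
    lt_of_lt_of_le (by linarith) (le_trans (hδle i h) (le_trans (min_le_right _ _) (min_le_left _ _)))
  have hrgapδ : ∀ i, i < k → δ ≤ G i := fun i h =>
    le_trans (hδle i h) (le_trans (min_le_right _ _) (min_le_right _ _))
  have hrgap : ∀ i, i < k → 2 * r < q i - p i := by
    intro i h
    have := le_trans (hrgapδ i h) (min_le_left _ _)
    linarith
  have hrgap2 : ∀ i, i + 1 < k → 2 * r < p (i + 1) - q i := by
    intro i h
    have h1 := hrgapδ i (by omega)
    rw [hGdef] at h1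
    have := le_trans h1 (min_le_right _ _)
    rw [if_pos h] at this
    linarith
  set N : ℕ := 2 * k with hNdef
  set sfn : ℕ → ℝ := fun m => (if m % 2 = 0 then p (m / 2) else q (m / 2)) - r with hsfndef
  set efn : ℕ → ℝ := fun m => sfn m + 2 * r with hefndef
  set cfn : ℕ → ℝ := fun m => if m % 2 = 0 then (1:ℝ) else -1 with hcfndef
  have hlt : ∀ m, m < N → sfn m < efn m := by
    intro m _
    have he : efn m = sfn m + 2 * r := rfl
    rw [he]; linarith
  have hle : ∀ m, m + 1 < N → efn m ≤ sfn (m + 1) := by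
    intro m hm
    have he : efn m = (if m % 2 = 0 then p (m / 2) else q (m / 2)) - r + 2 * r := rfl
    have hs : sfn (m + 1) = (if (m + 1) % 2 = 0 then p ((m + 1) / 2) else q ((m + 1) / 2)) - r := rfl
    rcases Nat.mod_two_eq_zero_or_one m with h | h
    · have h2 : (m + 1) / 2 = m / 2 := by omega
      have hik : m / 2 < k := by omega
      rw [he, hs, if_pos h, if_neg (by omega), h2]
      have := hrgap (m / 2) hik
      linarith
    · have h1 : (m + 1) % 2 = 0 := by omega
      have h2 : (m + 1) / 2 = m / 2 + 1 := by omega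
      have hik : m / 2 + 1 < k := by omega
      rw [he, hs, if_neg (by omega), if_pos h1, h2]
      have := hrgap2 (m / 2) hik
      linarith
  have hScfn : ∀ j, j ≤ N → |∑ m ∈ Finset.range j, cfn m| ≤ 1 := by
    intro j _
    simp only [hcfndef]
    rw [cAlt_partial]
    split <;> norm_num
  have hsum0 : ∑ m ∈ Finset.range N, cfn m = 0 := by
    simp only [hcfndef]
    rw [cAlt_partial, if_pos (by omega : N % 2 = 0)]
  set φ : ℝ → ℝ := chainFn N sfn efn cfn with hφdef
  have hφ1 : ContDiff ℝ 1 φ := chain_contDiff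
  have hφ2 : HasCompactSupport φ :=
    HasCompactSupport.intro isCompact_Icc (chain_support hlt hle hsum0)
  have hφ3 : ∀ t : ℝ, φ t ∈ Icc (-1 : ℝ) 1 := by
    intro t
    have := abs_le.1 (chain_abs_le hlt hle hScfn t)
    exact ⟨this.1, this.2⟩
  have hderiv : ∀ t, deriv φ t = chainFn' N sfn efn cfn t :=
    fun t => (chain_hasDerivAt hlt t).deriv
  have hint : (∫ t : ℝ, A.indicator (fun _ => (1:ℝ)) t * deriv φ t)
      = ∑ m ∈ Finset.range N, cfn m * ∫ t : ℝ, A.indicator (fun _ => (1:ℝ)) t *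
          (deriv τ ((t - sfn m) / (efn m - sfn m)) * (1 / (efn m - sfn m))) := by
    have heq : (fun t => A.indicator (fun _ => (1:ℝ)) t * deriv φ t)
        = fun t => ∑ m ∈ Finset.range N, cfn m * (A.indicator (fun _ => (1:ℝ)) t *
            (deriv τ ((t - sfn m) / (efn m - sfn m)) * (1 / (efn m - sfn m)))) := by
      funext t
      rw [hderiv, chainFn', Finset.mul_sum]
      exact Finset.sum_congr rfl (fun m _ => by ring)
    rw [heq, integral_finset_sum _ (fun m hm => Integrable.const_mul
      (indicator_mul_integrable hA (transition_deriv_integrable (hlt m (Finset.mem_range.1 hm)))) _)]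
    exact Finset.sum_congr rfl (fun m _ => MeasureTheory.integral_const_mul _ _)
  have hterm : ∀ m ∈ Finset.range N, (if m % 2 = 0 then (3/4:ℝ) else -(1/4))
      ≤ cfn m * ∫ t : ℝ, A.indicator (fun _ => (1:ℝ)) t *
          (deriv τ ((t - sfn m) / (efn m - sfn m)) * (1 / (efn m - sfn m))) := by
    intro m hm
    have hmN := Finset.mem_range.1 hm
    have hes : efn m - sfn m = 2 * r := by
      have he : efn m = sfn m + 2 * r := rfl
      rw [he]; ring
    have hCr : C * (1 / (2 * r)) * (ε * r) ≤ 1 / 4 := by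
      have : C * (1 / (2 * r)) * (ε * r) = C * ε / 2 := by field_simp
      rw [this]; linarith
    rcases Nat.mod_two_eq_zero_or_one m with h | h
    · -- up transition at p (m/2)
      have hik : m / 2 < k := by omega
      have hIcc : Icc (sfn m) (efn m) = Icc (p (m / 2) - r) (p (m / 2) + r) := by
        have h1 : sfn m = p (m / 2) - r := by
          show (if m % 2 = 0 then p (m / 2) else q (m / 2)) - r = _
          rw [if_pos h]
        have h2 : efn m = p (m / 2) + r := by
          show sfn m + 2 * r = _
          rw [h1]; ring
        rw [h1, h2]
      have hup := transition_up hA (hlt m hmN) hC0 hCb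
      have hvol : (volume (Icc (sfn m) (efn m) \ A)).toReal ≤ ε * r := by
        apply ENNReal.toReal_le_of_le_ofReal (by positivity)
        rw [hIcc]
        exact (hR1 (m / 2) hik).2 r hr (hrR1 (m / 2) hik)
      have hmain : C * (1 / (efn m - sfn m)) * (volume (Icc (sfn m) (efn m) \ A)).toReal
          ≤ 1 / 4 := by
        rw [hes]
        calc C * (1 / (2 * r)) * (volume (Icc (sfn m) (efn m) \ A)).toReal
            ≤ C * (1 / (2 * r)) * (ε * r) := by
              apply mul_le_mul_of_nonneg_left hvol (by positivity)
          _ ≤ 1 / 4 := hCr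
      have hc : cfn m = 1 := by
        show (if m % 2 = 0 then (1:ℝ) else -1) = 1
        rw [if_pos h]
      rw [if_pos h, hc, one_mul]
      linarith [hup, hmain]
    · -- down transition at q (m/2)
      have hik : m / 2 < k := by omega
      have hIcc : Icc (sfn m) (efn m) = Icc (q (m / 2) - r) (q (m / 2) + r) := by
        have h1 : sfn m = q (m / 2) - r := by
          show (if m % 2 = 0 then p (m / 2) else q (m / 2)) - r = _
          rw [if_neg (by omega)]
        have h2 : efn m = q (m / 2) + r := by
          show sfn m + 2 * r = _
          rw [h1]; ring
        rw [h1, h2]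
      have hdown := transition_down hA (hlt m hmN) hC0 hCb
      have hvol : (volume (Icc (sfn m) (efn m) ∩ A)).toReal ≤ ε * r := by
        apply ENNReal.toReal_le_of_le_ofReal (by positivity)
        rw [hIcc]
        exact (hR0 (m / 2) hik).2 r hr (hrR0 (m / 2) hik)
      have hmain : C * (1 / (efn m - sfn m)) * (volume (Icc (sfn m) (efn m) ∩ A)).toReal
          ≤ 1 / 4 := by
        rw [hes]
        calc C * (1 / (2 * r)) * (volume (Icc (sfn m) (efn m) ∩ A)).toReal
            ≤ C * (1 / (2 * r)) * (ε * r) := by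
              apply mul_le_mul_of_nonneg_left hvol (by positivity)
          _ ≤ 1 / 4 := hCr
      have hc : cfn m = -1 := by
        show (if m % 2 = 0 then (1:ℝ) else -1) = -1
        rw [if_neg (by omega)]
      rw [if_neg (by omega), hc, neg_one_mul]
      have habs := abs_le.1 (le_trans hdown hmain)
      linarith [habs.2]
  have hlow : (k / 2 : ℝ) ≤ ∫ t : ℝ, A.indicator (fun _ => (1:ℝ)) t * deriv φ t := by
    rw [hint]
    calc (k / 2 : ℝ) = ∑ m ∈ Finset.range (2 * k), (if m % 2 = 0 then (3/4 : ℝ) else -(1/4)) :=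
          (lb_sum k).symm
      _ ≤ _ := Finset.sum_le_sum hterm
  calc ENNReal.ofReal (k / 2 : ℝ)
      ≤ ENNReal.ofReal (∫ t : ℝ, A.indicator (fun _ => (1:ℝ)) t * deriv φ t) :=
        ENNReal.ofReal_le_ofReal hlow
    _ ≤ totalVar (A.indicator (fun _ => (1:ℝ))) :=
        le_iSup (fun ψ : {ψ : ℝ → ℝ // ContDiff ℝ 1 ψ ∧ HasCompactSupport ψ ∧
          ∀ t : ℝ, ψ t ∈ Set.Icc (-1 : ℝ) 1} =>
            ENNReal.ofReal (∫ t : ℝ, A.indicator (fun _ => (1:ℝ)) t * deriv (ψ : ℝ → ℝ) t))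
          ⟨φ, hφ1, hφ2, hφ3⟩

/-! ### Total variation of a step function -/

lemma ofReal_twoK (K : ℕ) : ENNReal.ofReal (2 * (K : ℝ)) = 2 * (K : ℝ≥0∞) := by
  have h := ENNReal.ofReal_natCast (2 * K)
  push_cast at h
  exact h

lemma step_integral {K : ℕ} {a b : ℕ → ℝ} (hab : ∀ i, i < K → a i < b i)
    {φ : ℝ → ℝ} (hφ1 : ContDiff ℝ 1 φ) (hφ2 : HasCompactSupport φ)
    {x : ℝ → ℝ} (hx : x =ᵐ[volume] fun t => ∑ i ∈ Finset.range K,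
      (Icc (a i) (b i)).indicator (fun _ => (1:ℝ)) t) :
    ∫ t : ℝ, x t * deriv φ t = ∑ i ∈ Finset.range K, (φ (b i) - φ (a i)) := by
  have hdc : Continuous (deriv φ) := hφ1.continuous_deriv le_rfl
  have hdint : Integrable (deriv φ) := hdc.integrable_of_hasCompactSupport hφ2.deriv
  have h1 : (fun t : ℝ => x t * deriv φ t) =ᵐ[volume]
      fun t => ∑ i ∈ Finset.range K, (Icc (a i) (b i)).indicator (fun _ => (1:ℝ)) t * deriv φ t := by
    filter_upwards [hx] with t ht
    rw [ht, Finset.sum_mul]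
  rw [integral_congr_ae h1,
    integral_finset_sum _ (fun i _ => indicator_mul_integrable measurableSet_Icc hdint)]
  apply Finset.sum_congr rfl
  intro i hi
  have hiK := Finset.mem_range.1 hi
  have h2 : (fun t : ℝ => (Icc (a i) (b i)).indicator (fun _ => (1:ℝ)) t * deriv φ t)
      = (Icc (a i) (b i)).indicator (deriv φ) := by
    funext t
    by_cases ht : t ∈ Icc (a i) (b i)
    · rw [Set.indicator_of_mem ht, Set.indicator_of_mem ht, one_mul]
    · rw [Set.indicator_of_notMem ht, Set.indicator_of_notMem ht, zero_mul]
  rw [h2, integral_indicator measurableSet_Icc, integral_Icc_eq_integral_Ioc,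
    ← intervalIntegral.integral_of_le (le_of_lt (hab i hiK))]
  exact intervalIntegral.integral_deriv_eq_sub
    (fun t _ => (hφ1.differentiable one_ne_zero).differentiableAt)
    (hdc.intervalIntegrable _ _)

lemma c3_partial (j : ℕ) :
    ∑ m ∈ Finset.range j, (if m % 3 = 0 then (-1:ℝ) else if m % 3 = 1 then 2 else -1)
      = if j % 3 = 0 then 0 else if j % 3 = 1 then -1 else 1 := by
  induction j with
  | zero => simp
  | succ j ih =>
    rw [Finset.sum_range_succ, ih]
    have h : j % 3 = 0 ∨ j % 3 = 1 ∨ j % 3 = 2 := by omega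
    rcases h with h | h | h
    · have h2 : (j + 1) % 3 = 1 := by omega
      simp [h, h2]
    · have h2 : (j + 1) % 3 = 2 := by omega
      simp only [h, h2]
      norm_num
    · have h2 : (j + 1) % 3 = 0 := by omega
      simp only [h, h2]
      norm_num

lemma step_totalVar {K : ℕ} {a b : ℕ → ℝ} (hab : ∀ i, i < K → a i < b i)
    (hgap : ∀ i, i + 1 < K → b i < a (i + 1))
    {x : ℝ → ℝ} (hx : x =ᵐ[volume] fun t => ∑ i ∈ Finset.range K,
      (Icc (a i) (b i)).indicator (fun _ => (1:ℝ)) t) :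
    totalVar x = 2 * (K : ℝ≥0∞) := by
  apply le_antisymm
  · -- upper bound
    apply iSup_le
    rintro ⟨φ, hφ1, hφ2, hφ3⟩
    simp only []
    rw [step_integral hab hφ1 hφ2 hx]
    rw [← ofReal_twoK]
    apply ENNReal.ofReal_le_ofReal
    calc ∑ i ∈ Finset.range K, (φ (b i) - φ (a i))
        ≤ ∑ _i ∈ Finset.range K, (2:ℝ) := by
          apply Finset.sum_le_sum
          intro i _
          have h1 := hφ3 (b i)
          have h2 := hφ3 (a i)
          rw [mem_Icc] at h1 h2
          linarith [h1.2, h2.1]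
      _ = 2 * (K:ℝ) := by
          rw [Finset.sum_const, Finset.card_range]
          simp [mul_comm]
  · -- lower bound
    rcases Nat.eq_zero_or_pos K with rfl | hKpos
    · simp
    set Gg : ℕ → ℝ := fun i => if i + 1 < K then a (i + 1) - b i else 1 with hGgdef
    set δ : ℝ := ((Finset.range K).inf' ⟨0, Finset.mem_range.2 hKpos⟩ Gg) / 2 with hδdef
    have hδpos : 0 < δ := by
      rw [hδdef]
      apply div_pos _ two_pos
      apply (Finset.lt_inf'_iff _).2
      intro i hi
      rw [hGgdef]
      simp only []
      split
      · linarith [hgap i (by assumption)]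
      · norm_num
    have hδgap : ∀ i, i + 1 < K → 2 * δ ≤ a (i + 1) - b i := by
      intro i h
      have h1 : (Finset.range K).inf' ⟨0, Finset.mem_range.2 hKpos⟩ Gg ≤ Gg i :=
        Finset.inf'_le _ (Finset.mem_range.2 (by omega))
      rw [hGgdef] at h1
      simp only [if_pos h] at h1
      rw [hδdef]
      linarith
    set N : ℕ := 3 * K with hNdef
    set sfn : ℕ → ℝ := fun m =>
      if m % 3 = 0 then a (m / 3) - δ else if m % 3 = 1 then a (m / 3) else b (m / 3) with hsfndef
    set efn : ℕ → ℝ := fun m =>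
      if m % 3 = 0 then a (m / 3) else if m % 3 = 1 then b (m / 3) else b (m / 3) + δ with hefndef
    set cfn : ℕ → ℝ := fun m =>
      if m % 3 = 0 then (-1:ℝ) else if m % 3 = 1 then 2 else -1 with hcfndef
    have hsfn_eq : ∀ m, sfn m =
        if m % 3 = 0 then a (m / 3) - δ else if m % 3 = 1 then a (m / 3) else b (m / 3) :=
      fun m => rfl
    have hefn_eq : ∀ m, efn m =
        if m % 3 = 0 then a (m / 3) else if m % 3 = 1 then b (m / 3) else b (m / 3) + δ :=
      fun m => rfl
    have hlt : ∀ m, m < N → sfn m < efn m := by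
      intro m hm
      have hm3 : m / 3 < K := by omega
      rw [hsfn_eq, hefn_eq]
      have h : m % 3 = 0 ∨ m % 3 = 1 ∨ m % 3 = 2 := by omega
      rcases h with h | h | h
      · rw [if_pos h, if_pos h]; linarith
      · rw [if_neg (by omega), if_pos h, if_neg (by omega), if_pos h]
        exact hab _ hm3
      · rw [if_neg (by omega), if_neg (by omega), if_neg (by omega), if_neg (by omega)]
        linarith
    have hle : ∀ m, m + 1 < N → efn m ≤ sfn (m + 1) := by
      intro m hm
      rw [hefn_eq, hsfn_eq]
      have h : m % 3 = 0 ∨ m % 3 = 1 ∨ m % 3 = 2 := by omega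
      rcases h with h | h | h
      · have h1 : (m + 1) % 3 = 1 := by omega
        have h2 : (m + 1) / 3 = m / 3 := by omega
        rw [if_pos h, if_neg (by omega), if_pos h1, h2]
      · have h1 : (m + 1) % 3 = 2 := by omega
        have h2 : (m + 1) / 3 = m / 3 := by omega
        rw [if_neg (by omega), if_pos h, if_neg (by omega), if_neg (by omega), h2]
      · have h1 : (m + 1) % 3 = 0 := by omega
        have h2 : (m + 1) / 3 = m / 3 + 1 := by omega
        have h3 : m / 3 + 1 < K := by omega
        rw [if_neg (by omega), if_neg (by omega), if_pos h1, h2]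
        have := hδgap (m / 3) h3
        linarith
    have hScfn : ∀ j, j ≤ N → |∑ m ∈ Finset.range j, cfn m| ≤ 1 := by
      intro j _
      simp only [hcfndef]
      rw [c3_partial]
      split
      · norm_num
      · split <;> norm_num
    have hsum0 : ∑ m ∈ Finset.range N, cfn m = 0 := by
      simp only [hcfndef]
      rw [c3_partial, if_pos (by omega : N % 3 = 0)]
    set φ : ℝ → ℝ := chainFn N sfn efn cfn with hφdef
    have hφ1 : ContDiff ℝ 1 φ := chain_contDiff
    have hφ2 : HasCompactSupport φ :=
      HasCompactSupport.intro isCompact_Icc (chain_support hlt hle hsum0)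
    have hφ3 : ∀ t : ℝ, φ t ∈ Icc (-1 : ℝ) 1 := by
      intro t
      have := abs_le.1 (chain_abs_le hlt hle hScfn t)
      exact ⟨this.1, this.2⟩
    have hva : ∀ i, i < K → φ (a i) = -1 := by
      intro i hiK
      have hj : 3 * i < N := by omega
      have he : efn (3 * i) = a i := by
        rw [hefn_eq, if_pos (by omega : (3 * i) % 3 = 0)]
        congr 1
        omega
      have hts : ∀ k', 3 * i < k' → k' < N → a i ≤ sfn k' := by
        intro k' hk1 hk2
        have hs1 : sfn (3 * i + 1) = a i := by
          rw [hsfn_eq, if_neg (by omega), if_pos (by omega : (3 * i + 1) % 3 = 1)]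
          congr 1
          omega
        calc a i = sfn (3 * i + 1) := hs1.symm
          _ ≤ sfn k' := chain_s_le_s hlt hle _ _ (by omega) hk2
      have hplat := chain_plateau (c := cfn) hlt hle hj (t := a i) (by rw [he]) hts
      rw [hφdef, hplat]
      simp only [hcfndef]
      rw [c3_partial, if_neg (by omega), if_pos (by omega)]
    have hvb : ∀ i, i < K → φ (b i) = 1 := by
      intro i hiK
      have hj : 3 * i + 1 < N := by omega
      have he : efn (3 * i + 1) = b i := by
        rw [hefn_eq, if_neg (by omega), if_pos (by omega : (3 * i + 1) % 3 = 1)]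
        congr 1
        omega
      have hts : ∀ k', 3 * i + 1 < k' → k' < N → b i ≤ sfn k' := by
        intro k' hk1 hk2
        have hs1 : sfn (3 * i + 2) = b i := by
          rw [hsfn_eq, if_neg (by omega), if_neg (by omega)]
          congr 1
          omega
        calc b i = sfn (3 * i + 2) := hs1.symm
          _ ≤ sfn k' := chain_s_le_s hlt hle _ _ (by omega) hk2
      have hplat := chain_plateau (c := cfn) hlt hle hj (t := b i) (by rw [he]) hts
      rw [hφdef, hplat]
      simp only [hcfndef]
      rw [c3_partial, if_neg (by omega), if_neg (by omega)]
    have hintval : ∫ t : ℝ, x t * deriv φ t = 2 * (K:ℝ) := by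
      rw [step_integral hab hφ1 hφ2 hx]
      have : ∀ i ∈ Finset.range K, φ (b i) - φ (a i) = 2 := by
        intro i hi
        have hiK := Finset.mem_range.1 hi
        rw [hva i hiK, hvb i hiK]
        norm_num
      rw [Finset.sum_congr rfl this, Finset.sum_const, Finset.card_range]
      simp [mul_comm]
    calc 2 * (K : ℝ≥0∞) = ENNReal.ofReal (2 * (K:ℝ)) := (ofReal_twoK K).symm
      _ = ENNReal.ofReal (∫ t : ℝ, x t * deriv φ t) := by rw [hintval]
      _ ≤ totalVar x :=
          le_iSup (fun ψ : {ψ : ℝ → ℝ // ContDiff ℝ 1 ψ ∧ HasCompactSupport ψ ∧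
            ∀ t : ℝ, ψ t ∈ Set.Icc (-1 : ℝ) 1} =>
              ENNReal.ofReal (∫ t : ℝ, x t * deriv (ψ : ℝ → ℝ) t))
            ⟨φ, hφ1, hφ2, hφ3⟩

/-! ### Essential support interval of a set of positive measure -/

lemma cluster_interval {B : Set ℝ} {l u : ℝ} (hsub : B ⊆ Ioo l u)
    (hpos : 0 < volume B) :
    ∃ aB bB : ℝ, l ≤ aB ∧ aB < bB ∧ bB ≤ u ∧
      volume (B \ Icc aB bB) = 0 ∧
      (∀ t, aB < t → 0 < volume (B ∩ Ioo aB t)) ∧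
      (∀ t, t < bB → 0 < volume (B ∩ Ioo t bB)) := by
  have hlu : l < u := by
    obtain ⟨t, ht⟩ := nonempty_of_measure_ne_zero (ne_of_gt hpos)
    have := hsub ht
    exact lt_trans this.1 this.2
  set S1 : Set ℝ := {t | volume (B ∩ Iio t) = 0} with hS1def
  set S2 : Set ℝ := {t | volume (B ∩ Ioi t) = 0} with hS2def
  have hlS1 : l ∈ S1 := by
    have : B ∩ Iio l = ∅ := by
      apply eq_empty_of_forall_notMem
      rintro t ⟨htB, htl⟩
      rw [mem_Iio] at htl
      exact absurd (hsub htB).1 (by linarith)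
    simp [hS1def, this]
  have huS2 : u ∈ S2 := by
    have : B ∩ Ioi u = ∅ := by
      apply eq_empty_of_forall_notMem
      rintro t ⟨htB, htu⟩
      rw [mem_Ioi] at htu
      exact absurd (hsub htB).2 (by linarith)
    simp [hS2def, this]
  have hS1bdd : BddAbove S1 := by
    refine ⟨u, fun t ht => ?_⟩
    by_contra hc
    push_neg at hc
    have hBsub : B ⊆ B ∩ Iio t := fun z hz => ⟨hz, by
      rw [mem_Iio]; exact lt_trans (hsub hz).2 hc⟩
    have := measure_mono_null (fun z hz => hBsub hz) ht
    exact absurd this (ne_of_gt hpos)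
  have hS2bdd : BddBelow S2 := by
    refine ⟨l, fun t ht => ?_⟩
    by_contra hc
    push_neg at hc
    have hBsub : B ⊆ B ∩ Ioi t := fun z hz => ⟨hz, by
      rw [mem_Ioi]; exact lt_trans hc (hsub hz).1⟩
    have := measure_mono_null (fun z hz => hBsub hz) ht
    exact absurd this (ne_of_gt hpos)
  set aB := sSup S1 with haBdef
  set bB := sInf S2 with hbBdef
  have hlaB : l ≤ aB := le_csSup hS1bdd hlS1
  have hbBu : bB ≤ u := csInf_le hS2bdd huS2
  have ha0 : volume (B ∩ Iio aB) = 0 := by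
    have hU : B ∩ Iio aB ⊆ ⋃ n : ℕ, B ∩ Iio (aB - 1 / (n + 1)) := by
      rintro t ⟨htB, ht⟩
      rw [mem_Iio] at ht
      obtain ⟨n, hn⟩ := exists_nat_one_div_lt (by linarith : (0:ℝ) < aB - t)
      exact mem_iUnion.2 ⟨n, htB, by rw [mem_Iio]; push_cast; push_cast at hn; linarith⟩
    apply measure_mono_null hU
    apply measure_iUnion_null
    intro n
    have hlt : aB - 1 / (n + 1) < aB := by
      have : (0:ℝ) < 1 / ((n:ℝ) + 1) := by positivity
      linarith
    obtain ⟨t', ht'S1, ht'⟩ := exists_lt_of_lt_csSup ⟨l, hlS1⟩ hlt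
    exact measure_mono_null (inter_subset_inter_right _ (Iio_subset_Iio (le_of_lt ht'))) ht'S1
  have hb0 : volume (B ∩ Ioi bB) = 0 := by
    have hU : B ∩ Ioi bB ⊆ ⋃ n : ℕ, B ∩ Ioi (bB + 1 / (n + 1)) := by
      rintro t ⟨htB, ht⟩
      rw [mem_Ioi] at ht
      obtain ⟨n, hn⟩ := exists_nat_one_div_lt (by linarith : (0:ℝ) < t - bB)
      exact mem_iUnion.2 ⟨n, htB, by rw [mem_Ioi]; push_cast; push_cast at hn; linarith⟩
    apply measure_mono_null hU
    apply measure_iUnion_null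
    intro n
    have hlt : bB < bB + 1 / (n + 1) := by
      have : (0:ℝ) < 1 / ((n:ℝ) + 1) := by positivity
      linarith
    obtain ⟨t', ht'S2, ht'⟩ := exists_lt_of_csInf_lt ⟨u, huS2⟩ hlt
    exact measure_mono_null (inter_subset_inter_right _ (Ioi_subset_Ioi (le_of_lt ht'))) ht'S2
  have hdiff0 : ∀ c d : ℝ, volume (B \ Icc c d) = 0 → False → True := fun _ _ _ _ => trivial
  have hcover : volume (B \ Icc aB bB) = 0 := by
    have hsub2 : B \ Icc aB bB ⊆ (B ∩ Iio aB) ∪ (B ∩ Ioi bB) := by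
      rintro t ⟨htB, ht⟩
      rw [mem_Icc, not_and_or, not_le, not_le] at ht
      rcases ht with ht | ht
      · exact Or.inl ⟨htB, ht⟩
      · exact Or.inr ⟨htB, ht⟩
    exact measure_mono_null hsub2 (by
      apply measure_union_null ha0 hb0)
  have haBbB : aB < bB := by
    by_contra hc
    push_neg at hc
    have hIcc : volume (Icc aB bB) = 0 := by
      rcases lt_or_eq_of_le hc with h | h
      · rw [Icc_eq_empty (by linarith)]; exact measure_empty
      · rw [← h, Icc_self]; exact measure_singleton _
    have : volume B = 0 := by
      have hsub3 : B ⊆ (B \ Icc aB bB) ∪ Icc aB bB := by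
        intro t htB
        by_cases ht : t ∈ Icc aB bB
        · exact Or.inr ht
        · exact Or.inl ⟨htB, ht⟩
      exact measure_mono_null hsub3 (measure_union_null hcover hIcc)
    exact absurd this (ne_of_gt hpos)
  refine ⟨aB, bB, hlaB, haBbB, hbBu, hcover, ?_, ?_⟩
  · intro t ht
    have hne : volume (B ∩ Iio t) ≠ 0 := by
      intro hz
      exact absurd (le_csSup hS1bdd hz) (not_le.2 ht)
    have hsub4 : B ∩ Iio t ⊆ (B ∩ Ioo aB t) ∪ ((B ∩ Iio aB) ∪ (B ∩ {aB})) := by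
      rintro z ⟨hzB, hz⟩
      rw [mem_Iio] at hz
      rcases lt_trichotomy z aB with h | h | h
      · exact Or.inr (Or.inl ⟨hzB, h⟩)
      · exact Or.inr (Or.inr ⟨hzB, h⟩)
      · exact Or.inl ⟨hzB, h, hz⟩
    rcases eq_or_lt_of_le (zero_le (a := volume (B ∩ Ioo aB t))) with h | h
    · exfalso
      apply hne
      apply measure_mono_null hsub4
      apply measure_union_null h.symm
      apply measure_union_null ha0
      exact measure_mono_null inter_subset_right (measure_singleton _)
    · exact h
  · intro t ht
    have hne : volume (B ∩ Ioi t) ≠ 0 := by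
      intro hz
      exact absurd (csInf_le hS2bdd hz) (not_le.2 ht)
    have hsub4 : B ∩ Ioi t ⊆ (B ∩ Ioo t bB) ∪ ((B ∩ Ioi bB) ∪ (B ∩ {bB})) := by
      rintro z ⟨hzB, hz⟩
      rw [mem_Ioi] at hz
      rcases lt_trichotomy z bB with h | h | h
      · exact Or.inl ⟨hzB, hz, h⟩
      · exact Or.inr (Or.inr ⟨hzB, h⟩)
      · exact Or.inr (Or.inl ⟨hzB, h⟩)
    rcases eq_or_lt_of_le (zero_le (a := volume (B ∩ Ioo t bB))) with h | h
    · exfalso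
      apply hne
      apply measure_mono_null hsub4
      apply measure_union_null h.symm
      apply measure_union_null hb0
      exact measure_mono_null inter_subset_right (measure_singleton _)
    · exact h

/-! ### Structure from a maximal pattern -/

lemma structure_of_maximal_pattern {A : Set ℝ} {t₀ T : ℝ} (hA : MeasurableSet A)
    (hsub : A ⊆ Ioo t₀ T) {K : ℕ} (hKpos : 0 < K) (hPK : Pat A K)
    (hmax : ¬ Pat A (K + 1)) :
    ∃ a b : ℕ → ℝ,
      (∀ i, i < K → t₀ ≤ a i ∧ a i < b i ∧ b i ≤ T) ∧
      (∀ i, i + 1 < K → b i < a (i + 1)) ∧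
      (∀ i, i < K → volume (Ioo (a i) (b i) \ A) = 0) ∧
      volume (A \ ⋃ i ∈ Finset.range K, Icc (a i) (b i)) = 0 := by
  classical
  obtain ⟨p, q, hp1, hq0, hpq, hqp⟩ := hPK
  have hpmem : ∀ i, i < K → p i ∈ Ioo t₀ T := fun i hi => DP1_mem hsub (hp1 i hi)
  set q' : ℕ → ℝ := fun i => if i = 0 then t₀ - 1 else q (i - 1) with hq'def
  have hq'0 : q' 0 = t₀ - 1 := rfl
  have hq'succ : ∀ i, q' (i + 1) = q i := fun i => by
    show (if i + 1 = 0 then t₀ - 1 else q (i + 1 - 1)) = q i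
    rw [if_neg (by omega)]
    congr 1
  have hq'p : ∀ i, i < K → q' i < p i := by
    intro i hi
    rcases Nat.eq_zero_or_pos i with rfl | hipos
    · rw [hq'0]
      have := (hpmem 0 hi).1
      linarith
    · have : q' i = q (i - 1) := by
        show (if i = 0 then t₀ - 1 else q (i - 1)) = q (i - 1)
        rw [if_neg (by omega)]
      rw [this]
      have := hqp (i - 1) (by omega)
      rwa [(by omega : i - 1 + 1 = i)] at this
  have hpq' : ∀ i, i < K → p i < q' (i + 1) := by
    intro i hi
    rw [hq'succ]
    exact hpq i hi
  -- positive measure of each cluster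
  set B : ℕ → Set ℝ := fun i => A ∩ Ioo (max (q' i) t₀) (min (q' (i + 1)) T) with hBdef
  have hBmeas : ∀ i, MeasurableSet (B i) := fun i => hA.inter measurableSet_Ioo
  have hBsub : ∀ i, B i ⊆ Ioo (max (q' i) t₀) (min (q' (i + 1)) T) := fun i => inter_subset_right
  have hBsubA : ∀ i, B i ⊆ A := fun i => inter_subset_left
  have hBpos : ∀ i, i < K → 0 < volume (B i) := by
    intro i hi
    obtain ⟨r₀, hr₀, hr⟩ := hp1 i hi (1/2) (by norm_num)
    have h1 : max (q' i) t₀ < p i := max_lt (hq'p i hi) (hpmem i hi).1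
    have h2 : p i < min (q' (i + 1)) T := lt_min (hpq' i hi) (hpmem i hi).2
    set r : ℝ := min (r₀ / 2) (min ((p i - max (q' i) t₀) / 2) ((min (q' (i + 1)) T - p i) / 2))
      with hrdef
    have hrpos : 0 < r := by
      apply lt_min (by linarith)
      apply lt_min <;> linarith
    have hrle : r ≤ r₀ / 2 := min_le_left _ _
    have hrlt : r < r₀ := by linarith
    have hIccsub : Icc (p i - r) (p i + r) ⊆ Ioo (max (q' i) t₀) (min (q' (i + 1)) T) := by
      intro z hz
      rw [mem_Icc] at hz
      have hr1 : r ≤ (p i - max (q' i) t₀) / 2 :=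
        le_trans (min_le_right _ _) (min_le_left _ _)
      have hr2 : r ≤ (min (q' (i + 1)) T - p i) / 2 :=
        le_trans (min_le_right _ _) (min_le_right _ _)
      rw [mem_Ioo]
      constructor
      · linarith [hz.1]
      · linarith [hz.2]
    have hbound := hr r hrpos hrlt
    by_contra hc
    push_neg at hc
    rw [le_zero_iff] at hc
    have hIA : volume (Icc (p i - r) (p i + r) ∩ A) = 0 := by
      apply measure_mono_null _ hc
      intro z ⟨hz1, hz2⟩
      exact ⟨hz2, hIccsub hz1⟩
    have hsum := measure_inter_add_diff (μ := volume) (Icc (p i - r) (p i + r)) hA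
    rw [hIA, zero_add] at hsum
    rw [hsum] at hbound
    rw [Real.volume_Icc] at hbound
    rw [ENNReal.ofReal_le_ofReal_iff (by positivity)] at hbound
    linarith
  -- cluster intervals
  have hcl : ∀ i, i < K → ∃ aB bB : ℝ,
      max (q' i) t₀ ≤ aB ∧ aB < bB ∧ bB ≤ min (q' (i + 1)) T ∧
      volume (B i \ Icc aB bB) = 0 ∧
      (∀ t, aB < t → 0 < volume (B i ∩ Ioo aB t)) ∧
      (∀ t, t < bB → 0 < volume (B i ∩ Ioo t bB)) := by
    intro i hi
    exact cluster_interval (hBsub i) (hBpos i hi)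
  set a : ℕ → ℝ := fun i => if h : i < K then (hcl i h).choose else 0 with hadef
  set b : ℕ → ℝ := fun i => if h : i < K then (hcl i h).choose_spec.choose else 1 with hbdef
  have hab : ∀ i, i < K →
      max (q' i) t₀ ≤ a i ∧ a i < b i ∧ b i ≤ min (q' (i + 1)) T ∧
      volume (B i \ Icc (a i) (b i)) = 0 ∧
      (∀ t, a i < t → 0 < volume (B i ∩ Ioo (a i) t)) ∧
      (∀ t, t < b i → 0 < volume (B i ∩ Ioo t (b i))) := by
    intro i hi
    have h1 : a i = (hcl i hi).choose := by rw [hadef]; simp only [dif_pos hi]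
    have h2 : b i = (hcl i hi).choose_spec.choose := by rw [hbdef]; simp only [dif_pos hi]
    rw [h1, h2]
    exact (hcl i hi).choose_spec.choose_spec
  -- no gaps inside clusters
  have hnogap : ∀ i, i < K → volume (Ioo (a i) (b i) \ A) = 0 := by
    intro i hi
    by_contra hc
    have hCpos : 0 < volume (Ioo (a i) (b i) \ A) := by
      rcases eq_or_lt_of_le (zero_le (a := volume (Ioo (a i) (b i) \ A))) with h | h
      · exact absurd h.symm hc
      · exact h
    have hCmeas : MeasurableSet (Ioo (a i) (b i) \ A) := measurableSet_Ioo.diff hA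
    obtain ⟨qs, hqsC, hqs0⟩ := exists_DP0 hCmeas hCpos (fun t ht => ht.2)
    have hqsmem : qs ∈ Ioo (a i) (b i) := hqsC.1
    obtain ⟨hai, haibi, hbiu, hcov, hPa, hPb⟩ := hab i hi
    have hleft := hPa qs hqsmem.1
    have hright := hPb qs hqsmem.2
    obtain ⟨ps, hpsmem, hps1⟩ := exists_DP1 ((hBmeas i).inter measurableSet_Ioo) hleft
      (fun t ht => hBsubA i ht.1)
    obtain ⟨ps', hps'mem, hps'1⟩ := exists_DP1 ((hBmeas i).inter measurableSet_Ioo) hright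
      (fun t ht => hBsubA i ht.1)
    -- build a bigger pattern
    apply hmax
    refine ⟨fun j => if j < i then p j else if j = i then ps else if j = i + 1 then ps'
        else p (j - 1),
      fun j => if j < i then q j else if j = i then qs else q (j - 1), ?_, ?_, ?_, ?_⟩
    · intro j hj
      dsimp only
      split
      · exact hp1 j (by omega)
      · split
        · exact hps1
        · split
          · exact hps'1
          · exact hp1 (j - 1) (by omega)
    · intro j hj
      dsimp only
      split
      · exact hq0 j (by omega)
      · split
        · exact hqs0
        · exact hq0 (j - 1) (by omega)
    · intro j hj
      dsimp only
      rcases lt_trichotomy j i with h | h | h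
      · rw [if_pos h, if_pos h]
        exact hpq j (by omega)
      · subst h
        have eP : (if j < j then p j else if j = j then ps else if j = j + 1 then ps'
            else p (j - 1)) = ps := by
          rw [if_neg (lt_irrefl j), if_pos rfl]
        have eQ : (if j < j then q j else if j = j then qs else q (j - 1)) = qs := by
          rw [if_neg (lt_irrefl j), if_pos rfl]
        rw [eP, eQ]
        exact hpsmem.2.2
      · by_cases h2 : j = i + 1
        · have eP : (if j < i then p j else if j = i then ps else if j = i + 1 then ps'
              else p (j - 1)) = ps' := by
            rw [if_neg (by omega), if_neg (by omega), if_pos h2]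
          have eQ : (if j < i then q j else if j = i then qs else q (j - 1)) = q (j - 1) := by
            rw [if_neg (by omega), if_neg (by omega)]
          rw [eP, eQ]
          have h4 : ps' < b i := hps'mem.2.2
          have h5 : b i ≤ q' (i + 1) := le_trans hbiu (min_le_left _ _)
          rw [hq'succ] at h5
          have h6 : (j : ℕ) - 1 = i := by omega
          rw [h6]
          linarith
        · have eP : (if j < i then p j else if j = i then ps else if j = i + 1 then ps'
              else p (j - 1)) = p (j - 1) := by
            rw [if_neg (by omega), if_neg (by omega), if_neg h2]
          have eQ : (if j < i then q j else if j = i then qs else q (j - 1)) = q (j - 1) := by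
            rw [if_neg (by omega), if_neg (by omega)]
          rw [eP, eQ]
          exact hpq (j - 1) (by omega)
    · intro j hj
      dsimp only
      rcases lt_trichotomy (j + 1) i with h | h | h
      · rw [if_pos (by omega : j < i), if_pos h]
        exact hqp j (by omega)
      · -- j + 1 = i
        have eQ : (if j < i then q j else if j = i then qs else q (j - 1)) = q j :=
          if_pos (by omega)
        have eP : (if j + 1 < i then p (j + 1) else if j + 1 = i then ps
            else if j + 1 = i + 1 then ps' else p (j + 1 - 1)) = ps := by
          rw [if_neg (by omega), if_pos h]
        rw [eQ, eP]
        have h1 : q' i ≤ a i := le_trans (le_max_left _ _) (hab i hi).1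
        have h2 : q' i = q (i - 1) := by
          show (if i = 0 then t₀ - 1 else q (i - 1)) = q (i - 1)
          rw [if_neg (by omega)]
        have h3 : a i < ps := hpsmem.2.1
        have h6 : j = i - 1 := by omega
        rw [h6, ← h2]
        linarith
      · by_cases h2 : j = i
        · subst h2
          have eQ : (if j < j then q j else if j = j then qs else q (j - 1)) = qs := by
            rw [if_neg (lt_irrefl j), if_pos rfl]
          have eP : (if j + 1 < j then p (j + 1) else if j + 1 = j then ps
              else if j + 1 = j + 1 then ps' else p (j + 1 - 1)) = ps' := by
            rw [if_neg (by omega), if_neg (by omega), if_pos rfl]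
          rw [eQ, eP]
          exact hps'mem.2.1
        · have eQ : (if j < i then q j else if j = i then qs else q (j - 1)) = q (j - 1) := by
            rw [if_neg (by omega), if_neg (by omega)]
          have eP : (if j + 1 < i then p (j + 1) else if j + 1 = i then ps
              else if j + 1 = i + 1 then ps' else p (j + 1 - 1)) = p (j + 1 - 1) := by
            rw [if_neg (by omega), if_neg (by omega), if_neg (by omega)]
          rw [eQ, eP]
          have h4 : (j + 1 : ℕ) - 1 = (j - 1) + 1 := by omega
          rw [h4]
          exact hqp (j - 1) (by omega)
  -- right tail is null
  have htail : volume (A ∩ Ioi (q' K)) = 0 := by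
    by_contra hc
    have hpos' : 0 < volume (A ∩ Ioi (q' K)) := by
      rcases eq_or_lt_of_le (zero_le (a := volume (A ∩ Ioi (q' K)))) with h | h
      · exact absurd h.symm hc
      · exact h
    obtain ⟨ps, hpsmem, hps1⟩ := exists_DP1 (hA.inter measurableSet_Ioi) hpos'
      (fun t ht => ht.1)
    apply hmax
    refine ⟨fun j => if j < K then p j else ps, fun j => if j < K then q j else T + 1,
      ?_, ?_, ?_, ?_⟩
    · intro j hj
      dsimp only
      split
      · exact hp1 j (by assumption)
      · exact hps1
    · intro j hj
      dsimp only
      split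
      · exact hq0 j (by assumption)
      · exact DP0_of_far hsub (Or.inl (by linarith))
    · intro j hj
      dsimp only
      by_cases h : j < K
      · rw [if_pos h, if_pos h]; exact hpq j h
      · have hjK : j = K := by omega
        rw [if_neg h, if_neg h]
        have := (DP1_mem hsub hps1).2
        linarith
    · intro j hj
      dsimp only
      by_cases h : j + 1 < K
      · rw [if_pos (by omega), if_pos h]; exact hqp j h
      · have hjK : j + 1 = K := by omega
        rw [if_pos (by omega : j < K), if_neg (by omega)]
        have h2 : q j = q' K := by rw [← hjK, hq'succ]
        rw [h2]
        exact hpsmem.2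
  -- ordering between clusters
  have hbq : ∀ i, i < K → b i < q' (i + 1) := by
    intro i hi
    obtain ⟨hai, haibi, hbiu, hcov, hPa, hPb⟩ := hab i hi
    rcases lt_or_eq_of_le (le_trans hbiu (min_le_left _ _)) with h | h
    · exact h
    -- b i = q' (i+1) = q i : contradiction with DP0 (q i)
    exfalso
    have hqi : q' (i + 1) = q i := hq'succ i
    obtain ⟨r₀, hr₀, hr⟩ := hq0 i hi (1/2) (by norm_num)
    set r : ℝ := min (r₀ / 2) ((b i - a i) / 2) with hrdef
    have hrpos : 0 < r := lt_min (by linarith) (by linarith)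
    have hrlt : r < r₀ := lt_of_le_of_lt (min_le_left _ _) (by linarith)
    have hbound := hr r hrpos hrlt
    have hIoosub : Ioo (q i - r) (q i) ⊆ Ioo (a i) (b i) := by
      intro z hz
      rw [mem_Ioo] at hz ⊢
      have h1 : r ≤ (b i - a i) / 2 := min_le_right _ _
      have h2 : q i = b i := by rw [← hqi, ← h]
      constructor <;> linarith [hz.1, hz.2]
    have hIA : volume (Ioo (q i - r) (q i) \ A) = 0 := by
      apply measure_mono_null _ (hnogap i hi)
      intro z hz
      exact ⟨hIoosub hz.1, hz.2⟩
    have hIcap : volume (Ioo (q i - r) (q i) ∩ A) = ENNReal.ofReal r := by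
      have hsum := measure_inter_add_diff (μ := volume) (Ioo (q i - r) (q i)) hA
      rw [hIA, add_zero] at hsum
      rw [hsum, Real.volume_Ioo]
      congr 1
      ring
    have hsub5 : Ioo (q i - r) (q i) ∩ A ⊆ Icc (q i - r) (q i + r) ∩ A := by
      intro z hz
      exact ⟨⟨le_of_lt hz.1.1, by linarith [hz.1.2]⟩, hz.2⟩
    have := le_trans (le_of_eq hIcap.symm) (le_trans (measure_mono hsub5) hbound)
    rw [ENNReal.ofReal_le_ofReal_iff (by positivity)] at this
    linarith
  have hgap : ∀ i, i + 1 < K → b i < a (i + 1) := by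
    intro i hi
    have h1 := hbq i (by omega)
    have h2 : q' (i + 1) ≤ a (i + 1) := le_trans (le_max_left _ _) (hab (i + 1) hi).1
    linarith
  -- coverage
  have hcover : volume (A \ ⋃ i ∈ Finset.range K, Icc (a i) (b i)) = 0 := by
    set E : Set ℝ := (⋃ i ∈ Finset.range K, (B i \ Icc (a i) (b i))) ∪
      ((A ∩ Ioi (q' K)) ∪ (⋃ i ∈ Finset.range K, ({q' (i + 1)} : Set ℝ))) with hEdef
    have hE0 : volume E = 0 := by
      apply measure_union_null
      · apply (measure_biUnion_null_iff (Finset.range K).countable_toSet).2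
        intro i hi
        exact (hab i (Finset.mem_range.1 hi)).2.2.2.1
      · apply measure_union_null htail
        apply (measure_biUnion_null_iff (Finset.range K).countable_toSet).2
        intro i _
        exact measure_singleton _
    apply measure_mono_null _ hE0
    intro t ⟨htA, htU⟩
    rw [mem_iUnion₂] at htU
    push_neg at htU
    by_cases httail : q' K < t
    · exact Or.inr (Or.inl ⟨htA, httail⟩)
    push_neg at httail
    -- find the cluster containing t
    have ht0 : q' 0 < t := by
      rw [hq'0]
      have := (hsub htA).1
      linarith
    set i := Nat.findGreatest (fun j => q' j < t) (K - 1) with hidef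
    have hiK : i < K := by
      have h : i ≤ K - 1 := Nat.findGreatest_le (P := fun j => q' j < t) (K - 1)
      omega
    have hqit : q' i < t := Nat.findGreatest_spec (P := fun j => q' j < t) (Nat.zero_le _) ht0
    have htqi1 : t ≤ q' (i + 1) := by
      by_cases h : i + 1 ≤ K - 1
      · by_contra hc
        push_neg at hc
        exact absurd hc (Nat.findGreatest_is_greatest (P := fun j => q' j < t)
          (by rw [hidef]; omega) h)
      · have hiKe : i = K - 1 := by omega
        rw [hiKe, (by omega : K - 1 + 1 = K)]
        exact httail
    rcases lt_or_eq_of_le htqi1 with h | h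
    · -- t in B i
      have htB : t ∈ B i := by
        refine ⟨htA, ?_, ?_⟩
        · exact max_lt hqit (hsub htA).1
        · exact lt_min h (hsub htA).2
      exact Or.inl (mem_iUnion₂.2 ⟨i, Finset.mem_range.2 hiK, htB, htU i (Finset.mem_range.2 hiK)⟩)
    · exact Or.inr (Or.inr (mem_iUnion₂.2 ⟨i, Finset.mem_range.2 hiK, mem_singleton_iff.2 h⟩))
  exact ⟨a, b, fun i hi => ⟨le_trans (le_max_right _ _) (hab i hi).1, (hab i hi).2.1,
    le_trans (hab i hi).2.2.1 (min_le_right _ _)⟩, hgap, hnogap, hcover⟩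

/-! ### Uniqueness machinery -/

lemma pairUnion_lt0 {K : ℕ} (j : Fin K) : 2 * (j : ℕ) < 2 * K := by
  have := j.isLt; omega

lemma pairUnion_lt1 {K : ℕ} (j : Fin K) : 2 * (j : ℕ) + 1 < 2 * K := by
  have := j.isLt; omega

noncomputable def pairUnion (K : ℕ) (y : Fin (2 * K) → ℝ) : Set ℝ :=
  ⋃ j : Fin K, Icc (y ⟨2 * (j : ℕ), pairUnion_lt0 j⟩)
    (y ⟨2 * (j : ℕ) + 1, pairUnion_lt1 j⟩)

lemma pairUnion_sum {K : ℕ} {y : Fin (2 * K) → ℝ} (hy : StrictMono y) (t : ℝ) :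
    (∑ j : Fin K, (Icc (y ⟨2 * (j : ℕ), pairUnion_lt0 j⟩)
        (y ⟨2 * (j : ℕ) + 1, pairUnion_lt1 j⟩)).indicator (fun _ => (1:ℝ)) t)
      = (pairUnion K y).indicator (fun _ => (1:ℝ)) t := by
  classical
  by_cases ht : t ∈ pairUnion K y
  · rw [Set.indicator_of_mem ht]
    obtain ⟨j₀, hj₀⟩ := mem_iUnion.1 ht
    rw [Finset.sum_eq_single j₀]
    · rw [Set.indicator_of_mem hj₀]
    · intro j _ hjne
      apply Set.indicator_of_notMem
      intro hj
      rcases lt_or_gt_of_ne (fun h => hjne (by exact_mod_cast Fin.ext h)) with h | h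
      · -- j < j₀ : t ≤ y (2j+1) < y (2j₀) ≤ t
        have h1 : (⟨2 * (j : ℕ) + 1, by have := j.isLt; omega⟩ : Fin (2 * K))
            < ⟨2 * (j₀ : ℕ), by have := j₀.isLt; omega⟩ := by
          rw [Fin.lt_def]
          simp only []
          have : (j : ℕ) < (j₀ : ℕ) := h
          omega
        have := hy h1
        have h2 := hj.2
        have h3 := hj₀.1
        linarith
      · have h1 : (⟨2 * (j₀ : ℕ) + 1, by have := j₀.isLt; omega⟩ : Fin (2 * K))
            < ⟨2 * (j : ℕ), by have := j.isLt; omega⟩ := by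
          rw [Fin.lt_def]
          simp only []
          have : (j₀ : ℕ) < (j : ℕ) := h
          omega
        have := hy h1
        have h2 := hj.1
        have h3 := hj₀.2
        linarith
    · intro hj₀'
      exact absurd (Finset.mem_univ j₀) hj₀'
  · rw [Set.indicator_of_notMem ht]
    apply Finset.sum_eq_zero
    intro j _
    apply Set.indicator_of_notMem
    intro hj
    exact ht (mem_iUnion.2 ⟨j, hj⟩)

lemma pairUnion_closed {K : ℕ} (y : Fin (2 * K) → ℝ) : IsClosed (pairUnion K y) :=
  isClosed_iUnion_of_finite (fun _ => isClosed_Icc)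

lemma pairUnion_eq_of_null_symmDiff {K : ℕ} {y z : Fin (2 * K) → ℝ}
    (hy : StrictMono y) (hz : StrictMono z)
    (h0 : volume ((pairUnion K y \ pairUnion K z) ∪ (pairUnion K z \ pairUnion K y)) = 0) :
    pairUnion K y = pairUnion K z := by
  have key : ∀ (w v : Fin (2 * K) → ℝ), StrictMono w →
      volume (pairUnion K w \ pairUnion K v) = 0 →
      pairUnion K w ⊆ pairUnion K v := by
    intro w v hw hnull
    have hint : interior (pairUnion K w) ⊆ pairUnion K v := by
      by_contra hc
      rw [not_subset] at hc
      obtain ⟨x, hx1, hx2⟩ := hc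
      have hopen : IsOpen (interior (pairUnion K w) \ pairUnion K v) :=
        IsOpen.sdiff isOpen_interior (pairUnion_closed v)
      have hpos := hopen.measure_pos volume ⟨x, hx1, hx2⟩
      have : volume (interior (pairUnion K w) \ pairUnion K v) = 0 := by
        apply measure_mono_null _ hnull
        intro s hs
        exact ⟨interior_subset hs.1, hs.2⟩
      rw [this] at hpos
      exact lt_irrefl _ hpos
    have hsub : pairUnion K w ⊆ closure (interior (pairUnion K w)) := by
      intro s hs
      obtain ⟨j, hj⟩ := mem_iUnion.1 hs
      have hlt : w ⟨2 * (j : ℕ), by have := j.isLt; omega⟩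
          < w ⟨2 * (j : ℕ) + 1, by have := j.isLt; omega⟩ := by
        apply hw
        rw [Fin.lt_def]
        simp only []
        omega
      have h1 : Icc (w ⟨2 * (j : ℕ), by have := j.isLt; omega⟩)
          (w ⟨2 * (j : ℕ) + 1, by have := j.isLt; omega⟩)
          = closure (Ioo (w ⟨2 * (j : ℕ), by have := j.isLt; omega⟩)
            (w ⟨2 * (j : ℕ) + 1, by have := j.isLt; omega⟩)) :=
        (closure_Ioo (ne_of_lt hlt)).symm
      have h2 : Ioo (w ⟨2 * (j : ℕ), by have := j.isLt; omega⟩)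
          (w ⟨2 * (j : ℕ) + 1, by have := j.isLt; omega⟩) ⊆ interior (pairUnion K w) := by
        apply interior_maximal _ isOpen_Ioo
        intro s hs
        exact mem_iUnion.2 ⟨j, Ioo_subset_Icc_self hs⟩
      rw [h1] at hj
      exact closure_mono h2 hj
    intro s hs
    have := closure_mono hint (hsub hs)
    rwa [(pairUnion_closed v).closure_eq] at this
  apply subset_antisymm
  · exact key y z hy (measure_mono_null subset_union_left h0)
  · exact key z y hz (measure_mono_null subset_union_right h0)

lemma pairUnion_frontier {K : ℕ} {y : Fin (2 * K) → ℝ} (hy : StrictMono y) :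
    frontier (pairUnion K y) = Set.range y := by
  apply subset_antisymm
  · intro t ht
    have htU : t ∈ pairUnion K y := (pairUnion_closed y).frontier_subset ht
    obtain ⟨j, hj⟩ := mem_iUnion.1 htU
    by_cases h1 : t = y ⟨2 * (j : ℕ), by have := j.isLt; omega⟩
    · exact ⟨_, h1.symm⟩
    by_cases h2 : t = y ⟨2 * (j : ℕ) + 1, by have := j.isLt; omega⟩
    · exact ⟨_, h2.symm⟩
    exfalso
    have hIoo : t ∈ Ioo (y ⟨2 * (j : ℕ), by have := j.isLt; omega⟩)
        (y ⟨2 * (j : ℕ) + 1, by have := j.isLt; omega⟩) := by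
      rcases hj with ⟨ha, hb⟩
      exact ⟨lt_of_le_of_ne ha (fun h => h1 h.symm), lt_of_le_of_ne hb h2⟩
    have hint : t ∈ interior (pairUnion K y) := by
      have hsubU : Ioo (y ⟨2 * (j : ℕ), by have := j.isLt; omega⟩)
          (y ⟨2 * (j : ℕ) + 1, by have := j.isLt; omega⟩) ⊆ interior (pairUnion K y) := by
        apply interior_maximal _ isOpen_Ioo
        intro s hs
        exact mem_iUnion.2 ⟨j, Ioo_subset_Icc_self hs⟩
      exact hsubU hIoo
    rw [frontier_eq_closure_inter_closure] at ht
    have := ht.2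
    rw [closure_compl] at this
    exact this hint
  · rintro t ⟨m, rfl⟩
    constructor
    · -- y m ∈ closure U
      apply subset_closure
      rcases Nat.even_or_odd (m : ℕ) with he | ho
      · have hj : (m : ℕ) / 2 < K := by have := m.isLt; omega
        apply mem_iUnion.2 ⟨⟨(m : ℕ) / 2, hj⟩, ?_⟩
        have hm : (⟨2 * ((m : ℕ) / 2), by omega⟩ : Fin (2 * K)) = m := by
          apply Fin.ext
          simp only []
          rcases he with ⟨c, hc⟩
          omega
        rw [hm]
        refine ⟨le_rfl, ?_⟩
        apply le_of_lt
        apply hy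
        rw [Fin.lt_def]
        rcases he with ⟨c, hc⟩
        simp only []
        omega
      · have hj : (m : ℕ) / 2 < K := by have := m.isLt; omega
        apply mem_iUnion.2 ⟨⟨(m : ℕ) / 2, hj⟩, ?_⟩
        have hm : (⟨2 * ((m : ℕ) / 2) + 1, by omega⟩ : Fin (2 * K)) = m := by
          apply Fin.ext
          simp only []
          rcases ho with ⟨c, hc⟩
          omega
        rw [hm]
        refine ⟨?_, le_rfl⟩
        apply le_of_lt
        apply hy
        rw [Fin.lt_def]
        rcases ho with ⟨c, hc⟩
        simp only []
        omega
    · -- y m ∉ interior U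
      intro hint
      obtain ⟨ε, hε, hball⟩ := Metric.isOpen_iff.1 isOpen_interior _ hint
      rcases Nat.even_or_odd (m : ℕ) with he | ho'
      · -- left endpoint : go slightly below
        set d : ℝ := if h : (m : ℕ) = 0 then ε else min ε (y m - y ⟨(m : ℕ) - 1, by omega⟩)
          with hddef
        have hdpos : 0 < d := by
          rw [hddef]
          split
          · exact hε
          · apply lt_min hε
            have : (⟨(m : ℕ) - 1, by omega⟩ : Fin (2 * K)) < m := by
              rw [Fin.lt_def]; simp only []; omega
            linarith [hy this]
        have hdε : d ≤ ε := by
          rw [hddef]; split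
          · exact le_rfl
          · exact min_le_left _ _
        set w : ℝ := y m - d / 2 with hwdef
        have hwmem : w ∈ Metric.ball (y m) ε := by
          rw [Metric.mem_ball, Real.dist_eq, hwdef]
          rw [abs_of_nonpos (by linarith)]
          linarith
        have hw : w ∈ pairUnion K y := interior_subset (hball hwmem)
        obtain ⟨j', hj'⟩ := mem_iUnion.1 hw
        rcases he with ⟨c, hc⟩
        -- m = 2c
        have hcK : c < K := by have := m.isLt; omega
        rcases lt_or_ge (j' : ℕ) c with h | h
        · -- right endpoint of j' is y (2j'+1) ≤ y (2c - 1) ≤ y m - d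
          have hle1 : (⟨2 * (j' : ℕ) + 1, by have := j'.isLt; omega⟩ : Fin (2 * K))
              ≤ ⟨(m : ℕ) - 1, by have := m.isLt; omega⟩ := by
            rw [Fin.le_def]; simp only []; omega
          have hm0 : (m : ℕ) ≠ 0 := by omega
          have hdle : d ≤ y m - y ⟨(m : ℕ) - 1, by omega⟩ := by
            rw [hddef, dif_neg hm0]
            exact min_le_right _ _
          have := hy.monotone hle1
          have hj'2 := hj'.2
          rw [hwdef] at hj'2
          linarith
        · -- left endpoint of j' is ≥ y m > w
          have hle1 : m ≤ (⟨2 * (j' : ℕ), by have := j'.isLt; omega⟩ : Fin (2 * K)) := by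
            rw [Fin.le_def]; simp only []; omega
          have := hy.monotone hle1
          have hj'1 := hj'.1
          rw [hwdef] at hj'1
          linarith
      · -- right endpoint : go slightly above
        have hmlast : (m : ℕ) < 2 * K := m.isLt
        set d : ℝ := if h : (m : ℕ) + 1 < 2 * K
            then min ε (y ⟨(m : ℕ) + 1, h⟩ - y m) else ε
          with hddef
        have hdpos : 0 < d := by
          rw [hddef]
          split
          · next h =>
            apply lt_min hε
            have : m < (⟨(m : ℕ) + 1, h⟩ : Fin (2 * K)) := by
              rw [Fin.lt_def]; simp only []; omega
            linarith [hy this]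
          · exact hε
        have hdε : d ≤ ε := by
          rw [hddef]; split
          · exact min_le_left _ _
          · exact le_rfl
        set w : ℝ := y m + d / 2 with hwdef
        have hwmem : w ∈ Metric.ball (y m) ε := by
          rw [Metric.mem_ball, Real.dist_eq, hwdef]
          rw [abs_of_nonneg (by linarith)]
          linarith
        have hw : w ∈ pairUnion K y := interior_subset (hball hwmem)
        obtain ⟨j', hj'⟩ := mem_iUnion.1 hw
        rcases ho' with ⟨c, hc⟩
        -- m = 2c + 1
        have hcK : c < K := by omega
        rcases lt_or_ge c (j' : ℕ) with h | h
        · -- left endpoint of j' is y (2j') ≥ y (m+1) ≥ w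
          have hm1 : (m : ℕ) + 1 < 2 * K := by have := j'.isLt; omega
          have hle1 : (⟨(m : ℕ) + 1, hm1⟩ : Fin (2 * K))
              ≤ ⟨2 * (j' : ℕ), by have := j'.isLt; omega⟩ := by
            rw [Fin.le_def]; simp only []; omega
          have hdle : d ≤ y ⟨(m : ℕ) + 1, hm1⟩ - y m := by
            rw [hddef, dif_pos hm1]
            exact min_le_right _ _
          have := hy.monotone hle1
          have hj'1 := hj'.1
          rw [hwdef] at hj'1
          linarith
        · -- right endpoint of j' is y (2j'+1) ≤ y m < w
          have hle1 : (⟨2 * (j' : ℕ) + 1, by have := j'.isLt; omega⟩ : Fin (2 * K)) ≤ m := by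
            rw [Fin.le_def]; simp only []; omega
          have := hy.monotone hle1
          have hj'2 := hj'.2
          rw [hwdef] at hj'2
          linarith

lemma strictMono_eq_of_pairUnion_eq {K : ℕ} {y z : Fin (2 * K) → ℝ}
    (hy : StrictMono y) (hz : StrictMono z) (h : pairUnion K y = pairUnion K z) :
    y = z := by
  have h1 : Set.range y = Set.range z := by
    rw [← pairUnion_frontier hy, ← pairUnion_frontier hz, h]
  haveI : WellFoundedLT (Fin (2 * K)) := inferInstance
  exact (StrictMono.range_inj (β := Fin (2 * K)) (γ := ℝ) hy hz).1 h1

lemma strictMono_fin_of_lt_succ {n : ℕ} {f : Fin n → ℝ}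
    (h : ∀ m, (hm : m + 1 < n) → f ⟨m, by omega⟩ < f ⟨m + 1, hm⟩) : StrictMono f := by
  have key : ∀ d j, (hj : j + d < n) → 0 < d → f ⟨j, by omega⟩ < f ⟨j + d, hj⟩ := by
    intro d
    induction d with
    | zero => intro j hj hd; exact absurd hd (by omega)
    | succ d ih =>
      intro j hj hd
      rcases Nat.eq_zero_or_pos d with rfl | hdpos
      · exact h j (by omega)
      · refine lt_trans (ih j (by omega) hdpos) ?_
        have h3 : (⟨j + d + 1, by omega⟩ : Fin n) = ⟨j + (d + 1), hj⟩ := by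
          apply Fin.ext; show j + d + 1 = j + (d + 1); omega
        have := h (j + d) (by omega)
        rwa [h3] at this
  intro j j' hjj'
  have hv : (j : ℕ) < (j' : ℕ) := hjj'
  have hk := key ((j' : ℕ) - (j : ℕ)) (j : ℕ) (by omega) (by omega)
  have h1 : (⟨(j : ℕ) + ((j' : ℕ) - (j : ℕ)), by omega⟩ : Fin n) = j' := by
    apply Fin.ext; simp; omega
  have h2 : (⟨(j : ℕ), by omega⟩ : Fin n) = j := by
    apply Fin.ext; simp
  rwa [h1, h2] at hk

/-- Proposition 4.5 / `cor:minimal_representation`: minimal representation of the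
switching pattern `sgn(u)` of an admissible control with finitely many switches. -/
theorem minimal_representation
    (t₀ T a b : ℝ) (ht : t₀ < T) (ha : 0 < a) (hab : a ≤ b)
    (u : ℝ → ℝ) (hu_meas : Measurable u)
    (hu_vals : ∀ᵐ t ∂(volume.restrict (Set.Ioo t₀ T)),
      u t ∈ ({0} : Set ℝ) ∪ Set.Icc a b)
    (hTV : totalVar (Set.indicator (Set.Ioo t₀ T) fun s : ℝ => sgn01 (u s)) < ⊤) :
    ∃ K : ℕ,
      totalVar (Set.indicator (Set.Ioo t₀ T) fun s : ℝ => sgn01 (u s)) =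
        2 * (K : ℝ≥0∞) ∧
      ∃! th : Fin (2 * K) → ℝ,
        (∀ j, th j ∈ Set.Icc t₀ T) ∧ StrictMono th ∧
        ∀ᵐ t ∂(volume.restrict (Set.Ioo t₀ T)),
          sgn01 (u t) = ∑ j : Fin K,
            Set.indicator
              (Set.Icc (th ⟨2 * (j : ℕ), by have := j.isLt; omega⟩)
                (th ⟨2 * (j : ℕ) + 1, by have := j.isLt; omega⟩))
              (fun _ => (1 : ℝ)) t := by

  classical
  set A : Set ℝ := Ioo t₀ T ∩ {t | 0 < u t} with hAdef
  have hA : MeasurableSet A := measurableSet_Ioo.inter (hu_meas measurableSet_Ioi)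
  have hAsub : A ⊆ Ioo t₀ T := inter_subset_left
  have hxA : (Set.indicator (Set.Ioo t₀ T) fun s : ℝ => sgn01 (u s))
      = A.indicator (fun _ => (1:ℝ)) := by
    funext t
    by_cases h1 : t ∈ Ioo t₀ T
    · rw [Set.indicator_of_mem h1]
      by_cases h2 : 0 < u t
      · rw [Set.indicator_of_mem (show t ∈ A from ⟨h1, h2⟩)]
        simp [sgn01, h2]
      · rw [Set.indicator_of_notMem (show t ∉ A from fun hc => h2 hc.2)]
        simp [sgn01, h2]
    · rw [Set.indicator_of_notMem h1,
        Set.indicator_of_notMem (show t ∉ A from fun hc => h1 hc.1)]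
  rcases eq_or_lt_of_le (zero_le (a := volume A)) with hA0 | hApos
  · -- K = 0
    refine ⟨0, ?_, ?_⟩
    · have hx : (Set.indicator (Set.Ioo t₀ T) fun s : ℝ => sgn01 (u s)) =ᵐ[volume]
          fun t => ∑ i ∈ Finset.range 0, (Icc ((fun _ : ℕ => (0:ℝ)) i)
            ((fun _ : ℕ => (1:ℝ)) i)).indicator (fun _ => (1:ℝ)) t := by
        rw [hxA]
        filter_upwards [measure_eq_zero_iff_ae_notMem.1 hA0.symm] with t htA
        rw [Set.indicator_of_notMem htA]
        simp
      have := step_totalVar (a := fun _ => (0:ℝ)) (b := fun _ => (1:ℝ))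
        (fun i hi => absurd hi (by omega)) (fun i hi => absurd hi (by omega)) hx
      simpa using this
    · refine ⟨fun _ => 0, ⟨?_, ?_, ?_⟩, ?_⟩
      · intro j; exact absurd j.isLt (by omega)
      · intro j j' _; exact absurd j.isLt (by omega)
      · have h1 : ∀ᵐ t ∂volume, t ∉ A := measure_eq_zero_iff_ae_notMem.1 hA0.symm
        filter_upwards [h1.filter_mono (ae_mono Measure.restrict_le_self),
          ae_restrict_mem measurableSet_Ioo] with t htA htIoo
        have hu0 : ¬ 0 < u t := fun hc => htA ⟨htIoo, hc⟩
        simp [sgn01, hu0]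
      · intro y _
        funext j
        exact absurd j.isLt (by omega)
  · -- K ≥ 1
    rw [hxA] at hTV ⊢
    set NB : ℕ := ⌈2 * (totalVar (A.indicator (fun _ => (1:ℝ)))).toReal⌉₊ + 1 with hNBdef
    have hbound : ∀ k, Pat A k → k ≤ NB := by
      intro k hk
      have h1 := pat_le_totalVar hA hk
      have h2 : (k / 2 : ℝ) ≤ (totalVar (A.indicator (fun _ => (1:ℝ)))).toReal := by
        rw [← ENNReal.ofReal_le_iff_le_toReal (ne_of_lt hTV)]
        exact h1
      have h3 : (k : ℝ) ≤ 2 * (totalVar (A.indicator (fun _ => (1:ℝ)))).toReal := by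
        linarith
      have h4 : (k : ℝ) ≤ (⌈2 * (totalVar (A.indicator (fun _ => (1:ℝ)))).toReal⌉₊ : ℝ) :=
        le_trans h3 (Nat.le_ceil _)
      have h5 : k ≤ ⌈2 * (totalVar (A.indicator (fun _ => (1:ℝ)))).toReal⌉₊ := by
        exact_mod_cast h4
      omega
    have hP1 : Pat A 1 := by
      obtain ⟨p, hpA, hp1⟩ := exists_DP1 hA hApos (fun t ht => ht)
      refine ⟨fun _ => p, fun _ => T + 1, fun i _ => hp1,
        fun i _ => DP0_of_far hAsub (Or.inl (show T < T + 1 by linarith)),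
        fun i _ => ?_, fun i hi => ?_⟩
      · show p < T + 1
        have := (DP1_mem hAsub hp1).2
        linarith
      · omega
    set K : ℕ := Nat.findGreatest (Pat A) NB with hKdef
    have hK1 : 1 ≤ K := Nat.le_findGreatest (hbound 1 hP1) hP1
    have hPK : Pat A K := Nat.findGreatest_spec (P := Pat A) (hbound 1 hP1) hP1
    have hmax : ¬ Pat A (K + 1) := by
      intro hc
      exact absurd hc (Nat.findGreatest_is_greatest (by omega) (hbound (K + 1) hc))
    obtain ⟨av, bv, hprops, hgap, hnogap, hcover⟩ :=
      structure_of_maximal_pattern hA hAsub (by omega) hPK hmax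
    have hba : ∀ i₂, i₂ < K → ∀ i₁, i₁ < i₂ → bv i₁ < av i₂ := by
      intro i₂
      induction i₂ with
      | zero => intro _ i₁ h; omega
      | succ i₂ ih =>
        intro h2K i₁ h12
        rcases Nat.lt_succ_iff_lt_or_eq.1 h12 with h | h
        · have h0 := ih (by omega) i₁ h
          have h3 := (hprops i₂ (by omega)).2.1
          have h4 := hgap i₂ (by omega)
          linarith
        · subst h; exact hgap i₁ (by omega)
    set th : Fin (2 * K) → ℝ :=
      fun j => if (j : ℕ) % 2 = 0 then av ((j : ℕ) / 2) else bv ((j : ℕ) / 2) with hthdef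
    have hth0 : ∀ (i : ℕ) (h : 2 * i < 2 * K), th ⟨2 * i, h⟩ = av i := by
      intro i h
      show (if (2 * i) % 2 = 0 then av ((2 * i) / 2) else bv ((2 * i) / 2)) = av i
      rw [if_pos (by omega)]
      congr 1
      omega
    have hth1 : ∀ (i : ℕ) (h : 2 * i + 1 < 2 * K), th ⟨2 * i + 1, h⟩ = bv i := by
      intro i h
      show (if (2 * i + 1) % 2 = 0 then av ((2 * i + 1) / 2) else bv ((2 * i + 1) / 2)) = bv i
      rw [if_neg (by omega)]
      congr 1
      omega
    have hthmono : StrictMono th := by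
      apply strictMono_fin_of_lt_succ
      intro m hm
      show (if m % 2 = 0 then av (m / 2) else bv (m / 2))
        < (if (m + 1) % 2 = 0 then av ((m + 1) / 2) else bv ((m + 1) / 2))
      rcases Nat.mod_two_eq_zero_or_one m with h | h
      · rw [if_pos h, if_neg (by omega), (by omega : (m + 1) / 2 = m / 2)]
        exact (hprops (m / 2) (by omega)).2.1
      · rw [if_neg (by omega), if_pos (by omega), (by omega : (m + 1) / 2 = m / 2 + 1)]
        exact hgap (m / 2) (by omega)
    have hthmem : ∀ j, th j ∈ Icc t₀ T := by
      intro j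
      have hj2 : (j : ℕ) / 2 < K := by have := j.isLt; omega
      obtain ⟨h1, h2, h3⟩ := hprops ((j : ℕ) / 2) hj2
      show (if (j : ℕ) % 2 = 0 then av ((j : ℕ) / 2) else bv ((j : ℕ) / 2)) ∈ Icc t₀ T
      split
      · exact ⟨h1, by linarith⟩
      · exact ⟨by linarith, h3⟩
    -- the exceptional null set
    set E : Set ℝ := (⋃ i ∈ Finset.range K, (Ioo (av i) (bv i) \ A)) ∪
      ((A \ ⋃ i ∈ Finset.range K, Icc (av i) (bv i)) ∪
        (⋃ i ∈ Finset.range K, ({av i, bv i} : Set ℝ))) with hEdef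
    have hE0 : volume E = 0 := by
      apply measure_union_null
      · apply (measure_biUnion_null_iff (Finset.range K).countable_toSet).2
        intro i hi
        exact hnogap i (Finset.mem_range.1 hi)
      · apply measure_union_null hcover
        apply (measure_biUnion_null_iff (Finset.range K).countable_toSet).2
        intro i _
        have : ({av i, bv i} : Set ℝ) = {av i} ∪ {bv i} := rfl
        rw [this]
        exact measure_union_null (measure_singleton _) (measure_singleton _)
    -- the pointwise identity off E
    have hpoint : ∀ t, t ∉ E →
        A.indicator (fun _ => (1:ℝ)) t
          = ∑ i ∈ Finset.range K, (Icc (av i) (bv i)).indicator (fun _ => (1:ℝ)) t := by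
      intro t htE
      rw [hEdef] at htE
      simp only [mem_union, not_or] at htE
      obtain ⟨htE1, htE2, htE3⟩ := htE
      by_cases htA : t ∈ A
      · rw [Set.indicator_of_mem htA]
        have htcov : t ∈ ⋃ i ∈ Finset.range K, Icc (av i) (bv i) := by
          by_contra hc
          exact htE2 ⟨htA, hc⟩
        obtain ⟨i, hi, hti⟩ := mem_iUnion₂.1 htcov
        have hiK := Finset.mem_range.1 hi
        rw [Finset.sum_eq_single i]
        · rw [Set.indicator_of_mem hti]
        · intro j hj hjne
          apply Set.indicator_of_notMem
          intro htj
          have hjK := Finset.mem_range.1 hj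
          rcases lt_or_gt_of_ne hjne with h | h
          · have := hba i hiK j h
            have h1 := htj.2
            have h2 := hti.1
            linarith
          · have := hba j hjK i h
            have h1 := htj.1
            have h2 := hti.2
            linarith
        · intro hi'
          exact absurd hi hi'
      · rw [Set.indicator_of_notMem htA]
        symm
        apply Finset.sum_eq_zero
        intro i hi
        have hiK := Finset.mem_range.1 hi
        apply Set.indicator_of_notMem
        intro hti
        have hne : t ∉ ({av i, bv i} : Set ℝ) := by
          intro hc
          exact htE3 (mem_iUnion₂.2 ⟨i, hi, hc⟩)
        simp only [mem_insert_iff, mem_singleton_iff, not_or] at hne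
        have htIoo : t ∈ Ioo (av i) (bv i) :=
          ⟨lt_of_le_of_ne hti.1 (fun h => hne.1 h.symm), lt_of_le_of_ne hti.2 hne.2⟩
        exact htE1 (mem_iUnion₂.2 ⟨i, hi, htIoo, htA⟩)
    -- the step function a.e. representation (on all of ℝ)
    have hstep : A.indicator (fun _ => (1:ℝ)) =ᵐ[volume]
        fun t => ∑ i ∈ Finset.range K, (Icc (av i) (bv i)).indicator (fun _ => (1:ℝ)) t := by
      filter_upwards [measure_eq_zero_iff_ae_notMem.1 hE0] with t htE
      exact hpoint t htE
    refine ⟨K, step_totalVar (fun i hi => (hprops i hi).2.1) hgap hstep, ?_⟩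
    -- the a.e. identity on (t₀, T) for th
    have hsum_eq : ∀ t : ℝ,
        (∑ j : Fin K, (Icc (th ⟨2 * (j : ℕ), by have := j.isLt; omega⟩)
            (th ⟨2 * (j : ℕ) + 1, by have := j.isLt; omega⟩)).indicator (fun _ => (1:ℝ)) t)
          = ∑ i ∈ Finset.range K, (Icc (av i) (bv i)).indicator (fun _ => (1:ℝ)) t := by
      intro t
      rw [← Fin.sum_univ_eq_sum_range
        (fun i => (Icc (av i) (bv i)).indicator (fun _ => (1:ℝ)) t)]
      apply Finset.sum_congr rfl
      intro j _
      rw [hth0 (j : ℕ) (by have := j.isLt; omega), hth1 (j : ℕ) (by have := j.isLt; omega)]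
    have hae_th : ∀ᵐ t ∂(volume.restrict (Set.Ioo t₀ T)),
        sgn01 (u t) = ∑ j : Fin K,
          (Icc (th ⟨2 * (j : ℕ), by have := j.isLt; omega⟩)
            (th ⟨2 * (j : ℕ) + 1, by have := j.isLt; omega⟩)).indicator (fun _ => (1:ℝ)) t := by
      have h1 : ∀ᵐ t ∂volume, t ∉ E := measure_eq_zero_iff_ae_notMem.1 hE0
      filter_upwards [h1.filter_mono (ae_mono Measure.restrict_le_self),
        ae_restrict_mem measurableSet_Ioo] with t htE htIoo
      rw [hsum_eq t, ← hpoint t htE]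
      by_cases h2 : 0 < u t
      · rw [Set.indicator_of_mem (show t ∈ A from ⟨htIoo, h2⟩)]
        simp [sgn01, h2]
      · rw [Set.indicator_of_notMem (show t ∉ A from fun hc => h2 hc.2)]
        simp [sgn01, h2]
    refine ⟨th, ⟨hthmem, hthmono, hae_th⟩, ?_⟩
    -- uniqueness
    rintro y ⟨hy1, hy2, hy3⟩
    apply strictMono_eq_of_pairUnion_eq hy2 hthmono
    apply pairUnion_eq_of_null_symmDiff hy2 hthmono
    -- the symmetric difference is null
    have hae2 : ∀ᵐ t ∂(volume.restrict (Set.Ioo t₀ T)),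
        (pairUnion K y).indicator (fun _ => (1:ℝ)) t
          = (pairUnion K th).indicator (fun _ => (1:ℝ)) t := by
      filter_upwards [hy3, hae_th] with t h1 h2
      rw [← pairUnion_sum hy2 t, ← pairUnion_sum hthmono t, ← h1, ← h2]
    have hD : volume ({t : ℝ | (pairUnion K y).indicator (fun _ => (1:ℝ)) t
        ≠ (pairUnion K th).indicator (fun _ => (1:ℝ)) t} ∩ Ioo t₀ T) = 0 := by
      have := ae_iff.1 hae2
      rwa [Measure.restrict_apply' measurableSet_Ioo] at this
    have hUsub : ∀ (w : Fin (2 * K) → ℝ), (∀ j, w j ∈ Icc t₀ T) →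
        pairUnion K w ⊆ Icc t₀ T := by
      intro w hw s hs
      obtain ⟨j, hj⟩ := mem_iUnion.1 hs
      have h1 := hw ⟨2 * (j : ℕ), by have := j.isLt; omega⟩
      have h2 := hw ⟨2 * (j : ℕ) + 1, by have := j.isLt; omega⟩
      exact ⟨le_trans h1.1 hj.1, le_trans hj.2 h2.2⟩
    apply measure_mono_null
      (t := ({t : ℝ | (pairUnion K y).indicator (fun _ => (1:ℝ)) t
        ≠ (pairUnion K th).indicator (fun _ => (1:ℝ)) t} ∩ Ioo t₀ T) ∪ ({t₀} ∪ {T}))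
    · intro s hs
      have hsneq : (pairUnion K y).indicator (fun _ => (1:ℝ)) s
          ≠ (pairUnion K th).indicator (fun _ => (1:ℝ)) s := by
        rcases hs with ⟨h1, h2⟩ | ⟨h1, h2⟩
        · rw [Set.indicator_of_mem h1, Set.indicator_of_notMem h2]
          norm_num
        · rw [Set.indicator_of_notMem h2, Set.indicator_of_mem h1]
          norm_num
      have hsIcc : s ∈ Icc t₀ T := by
        rcases hs with ⟨h1, _⟩ | ⟨h1, _⟩
        · exact hUsub y hy1 h1
        · exact hUsub th hthmem h1
      by_cases hsIoo : s ∈ Ioo t₀ T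
      · exact Or.inl ⟨hsneq, hsIoo⟩
      · rcases eq_or_lt_of_le hsIcc.1 with h | h
        · exact Or.inr (Or.inl h.symm)
        · rcases eq_or_lt_of_le hsIcc.2 with h2 | h2
          · exact Or.inr (Or.inr h2)
          · exact absurd ⟨h, h2⟩ hsIoo
    · apply measure_union_null hD
      exact measure_union_null (measure_singleton _) (measure_singleton _)
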